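/- arXiv:1411.7955 — 6 statements merged into one kernel-verified Lean document; each statement's English description precedes it below -/
import Mathlib

section
/- For independent real-valued random variables X and Y with cumulative distribution functions F and G respectively, and with X' an i.i.d. copy of X and Y' an i.i.d. copy of Y (all four independent), the energy distance satisfies 2∫_{-∞}^{∞} (F(x) − G(x))² dx = 2E|X−Y| − E|X−X'| − E|Y−Y'|. -/
open MeasureTheory ProbabilityTheory Set
open scoped ENNReal

noncomputable section

namespace EnergyAux

variable {Ω : Type*} [MeasurableSpace Ω] {μ : Measure Ω} [IsProbabilityMeasure μ]

lemma slice_measure {A B : Ω → ℝ} (hA : Measurable A) (hB : Measurable B)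
    (h : IndepFun A B μ) (x : ℝ) :
    μ {ω | min (A ω) (B ω) ≤ x ∧ x < max (A ω) (B ω)}
      = μ (A ⁻¹' Iic x) * μ (B ⁻¹' Ioi x) + μ (B ⁻¹' Iic x) * μ (A ⁻¹' Ioi x) := by
  have hset : {ω | min (A ω) (B ω) ≤ x ∧ x < max (A ω) (B ω)}
      = (A ⁻¹' Iic x ∩ B ⁻¹' Ioi x) ∪ (B ⁻¹' Iic x ∩ A ⁻¹' Ioi x) := by
    ext ω
    simp only [mem_setOf_eq, min_le_iff, lt_max_iff, mem_union, mem_inter_iff, mem_preimage,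
      mem_Iic, mem_Ioi]
    constructor
    · rintro ⟨h1 | h1, h2 | h2⟩
      · exact absurd h2 (not_lt.2 h1)
      · exact Or.inl ⟨h1, h2⟩
      · exact Or.inr ⟨h1, h2⟩
      · exact absurd h2 (not_lt.2 h1)
    · rintro (⟨h1, h2⟩ | ⟨h1, h2⟩)
      · exact ⟨Or.inl h1, Or.inr h2⟩
      · exact ⟨Or.inr h1, Or.inl h2⟩
  have hdisj : Disjoint (A ⁻¹' Iic x ∩ B ⁻¹' Ioi x) (B ⁻¹' Iic x ∩ A ⁻¹' Ioi x) := by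
    rw [Set.disjoint_left]
    intro ω h1 h2
    simp only [mem_inter_iff, mem_preimage, mem_Iic, mem_Ioi] at h1 h2
    exact not_lt.2 h1.1 h2.2
  rw [hset, measure_union hdisj ((hB measurableSet_Iic).inter (hA measurableSet_Ioi)),
    h.measure_inter_preimage_eq_mul _ _ measurableSet_Iic measurableSet_Ioi,
    h.symm.measure_inter_preimage_eq_mul _ _ measurableSet_Iic measurableSet_Ioi]

lemma key {A B : Ω → ℝ} (hA : Measurable A) (hB : Measurable B)
    (h : IndepFun A B μ) (hInt : Integrable (fun ω => |A ω - B ω|) μ) :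
    (∫ ω, |A ω - B ω| ∂μ)
       = (∫ x, (cdf (μ.map A) x + cdf (μ.map B) x
           - 2 * cdf (μ.map A) x * cdf (μ.map B) x)) ∧
    Integrable (fun x => cdf (μ.map A) x + cdf (μ.map B) x
           - 2 * cdf (μ.map A) x * cdf (μ.map B) x) (volume : Measure ℝ) := by
  haveI : IsProbabilityMeasure (μ.map A) := Measure.isProbabilityMeasure_map hA.aemeasurable
  haveI : IsProbabilityMeasure (μ.map B) := Measure.isProbabilityMeasure_map hB.aemeasurable
  set F : ℝ → ℝ := fun x => cdf (μ.map A) x with hF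
  set G : ℝ → ℝ := fun x => cdf (μ.map B) x with hG
  have hF0 : ∀ x, 0 ≤ F x := fun x => cdf_nonneg _ x
  have hF1 : ∀ x, F x ≤ 1 := fun x => cdf_le_one _ x
  have hG0 : ∀ x, 0 ≤ G x := fun x => cdf_nonneg _ x
  have hG1 : ∀ x, G x ≤ 1 := fun x => cdf_le_one _ x
  have hnn : ∀ x, 0 ≤ F x + G x - 2 * F x * G x := by
    intro x
    have h1 : 0 ≤ F x * (1 - G x) := mul_nonneg (hF0 x) (by linarith [hG1 x])
    have h2 : 0 ≤ G x * (1 - F x) := mul_nonneg (hG0 x) (by linarith [hF1 x])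
    nlinarith
  have hs : MeasurableSet {p : Ω × ℝ | min (A p.1) (B p.1) ≤ p.2 ∧ p.2 < max (A p.1) (B p.1)} := by
    exact (measurableSet_le ((hA.comp measurable_fst).min (hB.comp measurable_fst))
        measurable_snd).inter
      (measurableSet_lt measurable_snd ((hA.comp measurable_fst).max (hB.comp measurable_fst)))
  have hlin : ∫⁻ ω, ENNReal.ofReal |A ω - B ω| ∂μ
      = ∫⁻ x, ENNReal.ofReal (F x + G x - 2 * F x * G x) := by
    calc ∫⁻ ω, ENNReal.ofReal |A ω - B ω| ∂μ
        = ∫⁻ ω, (volume : Measure ℝ) {x | min (A ω) (B ω) ≤ x ∧ x < max (A ω) (B ω)} ∂μ := by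
          refine lintegral_congr fun ω => ?_
          have hIco : {x | min (A ω) (B ω) ≤ x ∧ x < max (A ω) (B ω)}
              = Ico (min (A ω) (B ω)) (max (A ω) (B ω)) := rfl
          rw [hIco, Real.volume_Ico, max_sub_min_eq_abs, abs_sub_comm]
      _ = (μ.prod volume) {p : Ω × ℝ | min (A p.1) (B p.1) ≤ p.2 ∧ p.2 < max (A p.1) (B p.1)} :=
          (Measure.prod_apply hs).symm
      _ = ∫⁻ x, μ {ω | min (A ω) (B ω) ≤ x ∧ x < max (A ω) (B ω)} := Measure.prod_apply_symm hs
      _ = ∫⁻ x, ENNReal.ofReal (F x + G x - 2 * F x * G x) := by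
          refine lintegral_congr fun x => ?_
          rw [slice_measure hA hB h x]
          have hAIic : μ (A ⁻¹' Iic x) = ENNReal.ofReal (F x) := by
            rw [← Measure.map_apply hA measurableSet_Iic, ← ofReal_cdf]
          have hBIic : μ (B ⁻¹' Iic x) = ENNReal.ofReal (G x) := by
            rw [← Measure.map_apply hB measurableSet_Iic, ← ofReal_cdf]
          have hAIoi : μ (A ⁻¹' Ioi x) = ENNReal.ofReal (1 - F x) := by
            have hc : A ⁻¹' Ioi x = (A ⁻¹' Iic x)ᶜ := by
              ext ω; simp [not_le]
            rw [hc, prob_compl_eq_one_sub (hA measurableSet_Iic), hAIic,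
              ENNReal.ofReal_sub 1 (hF0 x), ENNReal.ofReal_one]
          have hBIoi : μ (B ⁻¹' Ioi x) = ENNReal.ofReal (1 - G x) := by
            have hc : B ⁻¹' Ioi x = (B ⁻¹' Iic x)ᶜ := by
              ext ω; simp [not_le]
            rw [hc, prob_compl_eq_one_sub (hB measurableSet_Iic), hBIic,
              ENNReal.ofReal_sub 1 (hG0 x), ENNReal.ofReal_one]
          rw [hAIic, hBIic, hAIoi, hBIoi, ← ENNReal.ofReal_mul (hF0 x),
            ← ENNReal.ofReal_mul (hG0 x),
            ← ENNReal.ofReal_add (mul_nonneg (hF0 x) (by linarith [hG1 x]))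
              (mul_nonneg (hG0 x) (by linarith [hF1 x]))]
          congr 1
          ring
  have hFmeas : Measurable F := (cdf (μ.map A)).mono.measurable
  have hGmeas : Measurable G := (cdf (μ.map B)).mono.measurable
  have hmeas : Measurable (fun x => F x + G x - 2 * F x * G x) := by
    fun_prop
  have habsnn : 0 ≤ᵐ[μ] fun ω => |A ω - B ω| := Filter.Eventually.of_forall fun ω => abs_nonneg _
  have hfin : ∫⁻ ω, ENNReal.ofReal |A ω - B ω| ∂μ < ⊤ :=
    (hasFiniteIntegral_iff_ofReal habsnn).1 hInt.hasFiniteIntegral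
  have hint2 : Integrable (fun x => F x + G x - 2 * F x * G x) (volume : Measure ℝ) := by
    refine ⟨hmeas.aestronglyMeasurable, ?_⟩
    rw [hasFiniteIntegral_iff_ofReal (Filter.Eventually.of_forall hnn)]
    rw [← hlin]
    exact hfin
  refine ⟨?_, hint2⟩
  rw [integral_eq_lintegral_of_nonneg_ae habsnn ((hA.sub hB).abs.aestronglyMeasurable),
    integral_eq_lintegral_of_nonneg_ae (Filter.Eventually.of_forall hnn)
      hmeas.aestronglyMeasurable, hlin]

end EnergyAux

theorem energy_distance_eq_L2_dist_cdf
    {Ω : Type*} [MeasurableSpace Ω] {μ : Measure Ω} [IsProbabilityMeasure μ]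
    (X X' Y Y' : Ω → ℝ)
    (hX : Measurable X) (hX' : Measurable X') (hY : Measurable Y) (hY' : Measurable Y')
    (hindep : iIndepFun ![X, X', Y, Y'] μ)
    (hXX' : μ.map X = μ.map X') (hYY' : μ.map Y = μ.map Y')
    (hXint : Integrable X μ) (hYint : Integrable Y μ) :
    2 * ∫ x : ℝ, ((cdf (μ.map X) x : ℝ) - cdf (μ.map Y) x) ^ 2
      = 2 * (∫ ω, |X ω - Y ω| ∂μ) - (∫ ω, |X ω - X' ω| ∂μ) - ∫ ω, |Y ω - Y' ω| ∂μ := by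
  -- integrability of the copies
  have hX'int : Integrable X' μ := by
    have h1 : Integrable id (μ.map X) :=
      (integrable_map_measure aestronglyMeasurable_id hX.aemeasurable).2 hXint
    rw [hXX'] at h1
    exact (integrable_map_measure aestronglyMeasurable_id hX'.aemeasurable).1 h1
  have hY'int : Integrable Y' μ := by
    have h1 : Integrable id (μ.map Y) :=
      (integrable_map_measure aestronglyMeasurable_id hY.aemeasurable).2 hYint
    rw [hYY'] at h1
    exact (integrable_map_measure aestronglyMeasurable_id hY'.aemeasurable).1 h1
  -- pairwise independence
  have hXY : IndepFun X Y μ := by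
    have := hindep.indepFun (i := 0) (j := 2) (by decide)
    simpa using this
  have hXX'i : IndepFun X X' μ := by
    have := hindep.indepFun (i := 0) (j := 1) (by decide)
    simpa using this
  have hYY'i : IndepFun Y Y' μ := by
    have := hindep.indepFun (i := 2) (j := 3) (by decide)
    simpa using this
  obtain ⟨e1, i1⟩ := EnergyAux.key hX hY hXY (hXint.sub hYint).abs
  obtain ⟨e2, i2⟩ := EnergyAux.key hX hX' hXX'i (hXint.sub hX'int).abs
  obtain ⟨e3, i3⟩ := EnergyAux.key hY hY' hYY'i (hYint.sub hY'int).abs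
  rw [← hXX'] at e2 i2
  rw [← hYY'] at e3 i3
  rw [e1, e2, e3]
  have i1' : Integrable (fun x : ℝ => 2 * ((cdf (μ.map X) x : ℝ) + cdf (μ.map Y) x
      - 2 * cdf (μ.map X) x * cdf (μ.map Y) x)) (volume : Measure ℝ) := i1.const_mul 2
  have i12 : Integrable (fun x : ℝ => 2 * ((cdf (μ.map X) x : ℝ) + cdf (μ.map Y) x
        - 2 * cdf (μ.map X) x * cdf (μ.map Y) x)
      - ((cdf (μ.map X) x : ℝ) + cdf (μ.map X) x
        - 2 * cdf (μ.map X) x * cdf (μ.map X) x)) (volume : Measure ℝ) := i1'.sub i2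
  calc 2 * ∫ x : ℝ, ((cdf (μ.map X) x : ℝ) - cdf (μ.map Y) x) ^ 2
      = ∫ x : ℝ, 2 * ((cdf (μ.map X) x : ℝ) - cdf (μ.map Y) x) ^ 2 :=
        (integral_const_mul 2 _).symm
    _ = ∫ x : ℝ, (2 * ((cdf (μ.map X) x : ℝ) + cdf (μ.map Y) x
            - 2 * cdf (μ.map X) x * cdf (μ.map Y) x)
          - ((cdf (μ.map X) x : ℝ) + cdf (μ.map X) x
            - 2 * cdf (μ.map X) x * cdf (μ.map X) x)
          - ((cdf (μ.map Y) x : ℝ) + cdf (μ.map Y) x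
            - 2 * cdf (μ.map Y) x * cdf (μ.map Y) x)) := by
        refine integral_congr_ae (Filter.Eventually.of_forall fun x => ?_)
        ring
    _ = (∫ x : ℝ, (2 * ((cdf (μ.map X) x : ℝ) + cdf (μ.map Y) x
            - 2 * cdf (μ.map X) x * cdf (μ.map Y) x)
          - ((cdf (μ.map X) x : ℝ) + cdf (μ.map X) x
            - 2 * cdf (μ.map X) x * cdf (μ.map X) x)))
        - ∫ x : ℝ, ((cdf (μ.map Y) x : ℝ) + cdf (μ.map Y) x
            - 2 * cdf (μ.map Y) x * cdf (μ.map Y) x) := integral_sub i12 i3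
    _ = (∫ x : ℝ, 2 * ((cdf (μ.map X) x : ℝ) + cdf (μ.map Y) x
            - 2 * cdf (μ.map X) x * cdf (μ.map Y) x))
        - (∫ x : ℝ, ((cdf (μ.map X) x : ℝ) + cdf (μ.map X) x
            - 2 * cdf (μ.map X) x * cdf (μ.map X) x))
        - ∫ x : ℝ, ((cdf (μ.map Y) x : ℝ) + cdf (μ.map Y) x
            - 2 * cdf (μ.map Y) x * cdf (μ.map Y) x) := by
        rw [integral_sub i1' i2]
    _ = 2 * (∫ x : ℝ, ((cdf (μ.map X) x : ℝ) + cdf (μ.map Y) x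
            - 2 * cdf (μ.map X) x * cdf (μ.map Y) x))
        - (∫ x : ℝ, ((cdf (μ.map X) x : ℝ) + cdf (μ.map X) x
            - 2 * cdf (μ.map X) x * cdf (μ.map X) x))
        - ∫ x : ℝ, ((cdf (μ.map Y) x : ℝ) + cdf (μ.map Y) x
            - 2 * cdf (μ.map Y) x * cdf (μ.map Y) x) := by
        rw [integral_const_mul]
end
end

section
/- For independent real-valued random variables X and Y with E|X| + E|Y| < ∞, the energy distance ℰ(X,Y) = 2E|X−Y| − E|X−X'| − E|Y−Y'| is nonnegative. -/
open MeasureTheory ProbabilityTheory Set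
open scoped ENNReal

noncomputable section

namespace EnergyAux

variable {Ω : Type*} [MeasurableSpace Ω] {μ : Measure Ω} [IsProbabilityMeasure μ]

lemma lintegral_xor_indicator (z w : ℝ) :
    ∫⁻ t, (if (z ≤ t ∧ ¬ w ≤ t) ∨ (w ≤ t ∧ ¬ z ≤ t) then (1:ℝ≥0∞) else 0)
      = ENNReal.ofReal |z - w| := by
  have hset : {t : ℝ | (z ≤ t ∧ ¬ w ≤ t) ∨ (w ≤ t ∧ ¬ z ≤ t)} = Ico (min z w) (max z w) := by
    ext t
    rcases le_total z w with h | h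
    · simp only [mem_setOf_eq, mem_Ico, min_eq_left h, max_eq_right h, not_le]
      constructor
      · rintro (⟨h1, h2⟩ | ⟨h1, h2⟩) <;> constructor <;> linarith
      · rintro ⟨h1, h2⟩; exact Or.inl ⟨h1, h2⟩
    · simp only [mem_setOf_eq, mem_Ico, min_eq_right h, max_eq_left h, not_le]
      constructor
      · rintro (⟨h1, h2⟩ | ⟨h1, h2⟩) <;> constructor <;> linarith
      · rintro ⟨h1, h2⟩; exact Or.inr ⟨h1, h2⟩
  calc ∫⁻ t, (if (z ≤ t ∧ ¬ w ≤ t) ∨ (w ≤ t ∧ ¬ z ≤ t) then (1:ℝ≥0∞) else 0)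
      = ∫⁻ t, (Ico (min z w) (max z w)).indicator (fun _ => (1:ℝ≥0∞)) t := by
        apply lintegral_congr; intro t
        by_cases h : (z ≤ t ∧ ¬ w ≤ t) ∨ (w ≤ t ∧ ¬ z ≤ t)
        · rw [if_pos h, Set.indicator_of_mem (by rw [← hset]; exact h)]
        · rw [if_neg h, Set.indicator_of_notMem (by rw [← hset]; exact h)]
    _ = volume (Ico (min z w) (max z w)) := by
        rw [lintegral_indicator_const measurableSet_Ico, one_mul]
    _ = ENNReal.ofReal |z - w| := by
        rw [Real.volume_Ico, max_sub_min_eq_abs, abs_sub_comm]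

lemma lintegral_abs_sub (Z W : Ω → ℝ) (hZ : Measurable Z) (hW : Measurable W) :
    ∫⁻ ω, ENNReal.ofReal |Z ω - W ω| ∂μ
      = ∫⁻ t, μ {ω | (Z ω ≤ t ∧ ¬ W ω ≤ t) ∨ (W ω ≤ t ∧ ¬ Z ω ≤ t)} := by
  classical
  have h1 : MeasurableSet {p : Ω × ℝ | Z p.1 ≤ p.2} :=
    measurableSet_le (hZ.comp measurable_fst) measurable_snd
  have h2 : MeasurableSet {p : Ω × ℝ | W p.1 ≤ p.2} :=
    measurableSet_le (hW.comp measurable_fst) measurable_snd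
  have hM : MeasurableSet {p : Ω × ℝ |
      (Z p.1 ≤ p.2 ∧ ¬ W p.1 ≤ p.2) ∨ (W p.1 ≤ p.2 ∧ ¬ Z p.1 ≤ p.2)} :=
    (h1.inter h2.compl).union (h2.inter h1.compl)
  have hk : AEMeasurable
      (fun p : Ω × ℝ => (if (Z p.1 ≤ p.2 ∧ ¬ W p.1 ≤ p.2) ∨ (W p.1 ≤ p.2 ∧ ¬ Z p.1 ≤ p.2)
        then (1:ℝ≥0∞) else 0)) (μ.prod volume) :=
    (Measurable.ite hM measurable_const measurable_const).aemeasurable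
  calc ∫⁻ ω, ENNReal.ofReal |Z ω - W ω| ∂μ
      = ∫⁻ ω, ∫⁻ t, (if (Z ω ≤ t ∧ ¬ W ω ≤ t) ∨ (W ω ≤ t ∧ ¬ Z ω ≤ t)
          then (1:ℝ≥0∞) else 0) ∂volume ∂μ := by
        apply lintegral_congr; intro ω
        rw [lintegral_xor_indicator]
    _ = ∫⁻ t, ∫⁻ ω, (if (Z ω ≤ t ∧ ¬ W ω ≤ t) ∨ (W ω ≤ t ∧ ¬ Z ω ≤ t)
          then (1:ℝ≥0∞) else 0) ∂μ ∂volume := lintegral_lintegral_swap hk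
    _ = ∫⁻ t, μ {ω | (Z ω ≤ t ∧ ¬ W ω ≤ t) ∨ (W ω ≤ t ∧ ¬ Z ω ≤ t)} := by
        apply lintegral_congr; intro t
        have hs : MeasurableSet {ω | (Z ω ≤ t ∧ ¬ W ω ≤ t) ∨ (W ω ≤ t ∧ ¬ Z ω ≤ t)} := by
          have hz : MeasurableSet {ω | Z ω ≤ t} := measurableSet_le hZ measurable_const
          have hw : MeasurableSet {ω | W ω ≤ t} := measurableSet_le hW measurable_const
          exact (hz.inter hw.compl).union (hw.inter hz.compl)
        rw [← lintegral_indicator_one hs]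
        apply lintegral_congr; intro ω
        rw [Set.indicator_apply]; rfl

lemma measure_xor_eq (Z W : Ω → ℝ) (hZ : Measurable Z) (hW : Measurable W)
    (h : IndepFun Z W μ) (t : ℝ) :
    μ {ω | (Z ω ≤ t ∧ ¬ W ω ≤ t) ∨ (W ω ≤ t ∧ ¬ Z ω ≤ t)}
      = μ (Z ⁻¹' Iic t) * (1 - μ (W ⁻¹' Iic t)) + μ (W ⁻¹' Iic t) * (1 - μ (Z ⁻¹' Iic t)) := by
  have hseteq : {ω | (Z ω ≤ t ∧ ¬ W ω ≤ t) ∨ (W ω ≤ t ∧ ¬ Z ω ≤ t)}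
      = (Z ⁻¹' Iic t ∩ W ⁻¹' Ioi t) ∪ (W ⁻¹' Iic t ∩ Z ⁻¹' Ioi t) := by
    ext ω
    simp [mem_Iic, mem_Ioi, not_le]
  have hdisj : Disjoint (Z ⁻¹' Iic t ∩ W ⁻¹' Ioi t) (W ⁻¹' Iic t ∩ Z ⁻¹' Ioi t) := by
    apply Set.disjoint_left.mpr
    rintro ω ⟨_, hw1⟩ ⟨hw2, _⟩
    simp only [mem_preimage, mem_Ioi, mem_Iic] at hw1 hw2
    linarith
  have hmeas2 : MeasurableSet (W ⁻¹' Iic t ∩ Z ⁻¹' Ioi t) :=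
    (hW measurableSet_Iic).inter (hZ measurableSet_Ioi)
  have hWc : μ (W ⁻¹' Ioi t) = 1 - μ (W ⁻¹' Iic t) := by
    rw [← Set.compl_Iic, Set.preimage_compl, prob_compl_eq_one_sub (hW measurableSet_Iic)]
  have hZc : μ (Z ⁻¹' Ioi t) = 1 - μ (Z ⁻¹' Iic t) := by
    rw [← Set.compl_Iic, Set.preimage_compl, prob_compl_eq_one_sub (hZ measurableSet_Iic)]
  rw [hseteq, measure_union hdisj hmeas2,
    h.measure_inter_preimage_eq_mul _ _ measurableSet_Iic measurableSet_Ioi,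
    h.symm.measure_inter_preimage_eq_mul _ _ measurableSet_Iic measurableSet_Ioi,
    hWc, hZc]

lemma ennreal_key {a c : ℝ≥0∞} (ha : a ≤ 1) (hc : c ≤ 1) :
    (a * (1 - a) + a * (1 - a)) + (c * (1 - c) + c * (1 - c))
      ≤ 2 * (a * (1 - c) + c * (1 - a)) := by
  have ha' : a ≠ ⊤ := (ha.trans_lt ENNReal.one_lt_top).ne
  have hc' : c ≠ ⊤ := (hc.trans_lt ENNReal.one_lt_top).ne
  obtain ⟨α, hα0, rfl⟩ : ∃ α : ℝ, 0 ≤ α ∧ a = ENNReal.ofReal α :=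
    ⟨a.toReal, ENNReal.toReal_nonneg, (ENNReal.ofReal_toReal ha').symm⟩
  obtain ⟨γ, hγ0, rfl⟩ : ∃ γ : ℝ, 0 ≤ γ ∧ c = ENNReal.ofReal γ :=
    ⟨c.toReal, ENNReal.toReal_nonneg, (ENNReal.ofReal_toReal hc').symm⟩
  have hα1 : α ≤ 1 := ENNReal.ofReal_le_one.mp ha
  have hγ1 : γ ≤ 1 := ENNReal.ofReal_le_one.mp hc
  have hsub : ∀ x : ℝ, 0 ≤ x → (1:ℝ≥0∞) - ENNReal.ofReal x = ENNReal.ofReal (1 - x) := by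
    intro x hx
    rw [← ENNReal.ofReal_one, ← ENNReal.ofReal_sub _ hx]
  have h1α : (0:ℝ) ≤ 1 - α := by linarith
  have h1γ : (0:ℝ) ≤ 1 - γ := by linarith
  have eA : ENNReal.ofReal α * ENNReal.ofReal (1 - α) = ENNReal.ofReal (α * (1 - α)) :=
    (ENNReal.ofReal_mul hα0).symm
  have eB : ENNReal.ofReal γ * ENNReal.ofReal (1 - γ) = ENNReal.ofReal (γ * (1 - γ)) :=
    (ENNReal.ofReal_mul hγ0).symm
  have eC : ENNReal.ofReal α * ENNReal.ofReal (1 - γ) = ENNReal.ofReal (α * (1 - γ)) :=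
    (ENNReal.ofReal_mul hα0).symm
  have eD : ENNReal.ofReal γ * ENNReal.ofReal (1 - α) = ENNReal.ofReal (γ * (1 - α)) :=
    (ENNReal.ofReal_mul hγ0).symm
  rw [hsub α hα0, hsub γ hγ0, eA, eB, eC, eD,
    ← ENNReal.ofReal_add (mul_nonneg hα0 h1α) (mul_nonneg hα0 h1α),
    ← ENNReal.ofReal_add (mul_nonneg hγ0 h1γ) (mul_nonneg hγ0 h1γ),
    ← ENNReal.ofReal_add (by nlinarith) (by nlinarith),
    ← ENNReal.ofReal_add (mul_nonneg hα0 h1γ) (mul_nonneg hγ0 h1α),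
    show (2:ℝ≥0∞) = ENNReal.ofReal 2 by norm_num,
    ← ENNReal.ofReal_mul (by norm_num)]
  exact ENNReal.ofReal_le_ofReal (by nlinarith [sq_nonneg (α - γ)])

end EnergyAux

open EnergyAux

theorem energy_distance_nonneg
    {Ω : Type*} [MeasurableSpace Ω] {μ : Measure Ω} [IsProbabilityMeasure μ]
    (X X' Y Y' : Ω → ℝ)
    (hX : Measurable X) (hX' : Measurable X') (hY : Measurable Y) (hY' : Measurable Y')
    (hindep : iIndepFun ![X, X', Y, Y'] μ)
    (hXX' : μ.map X = μ.map X') (hYY' : μ.map Y = μ.map Y')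
    (hXint : Integrable X μ) (hYint : Integrable Y μ) :
    0 ≤ 2 * (∫ ω, |X ω - Y ω| ∂μ) - (∫ ω, |X ω - X' ω| ∂μ) - ∫ ω, |Y ω - Y' ω| ∂μ := by
  classical
  have hIXY : IndepFun X Y μ := by
    have := hindep.indepFun (i := 0) (j := 2) (by decide)
    simpa using this
  have hIXX' : IndepFun X X' μ := by
    have := hindep.indepFun (i := 0) (j := 1) (by decide)
    simpa using this
  have hIYY' : IndepFun Y Y' μ := by
    have := hindep.indepFun (i := 2) (j := 3) (by decide)
    simpa using this
  -- same CDFs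
  have hFXX' : ∀ t, μ (X' ⁻¹' Iic t) = μ (X ⁻¹' Iic t) := fun t => by
    rw [← Measure.map_apply hX measurableSet_Iic, ← Measure.map_apply hX' measurableSet_Iic, hXX']
  have hFYY' : ∀ t, μ (Y' ⁻¹' Iic t) = μ (Y ⁻¹' Iic t) := fun t => by
    rw [← Measure.map_apply hY measurableSet_Iic, ← Measure.map_apply hY' measurableSet_Iic, hYY']
  -- integrability of X', Y'
  have hX'int : Integrable X' μ := by
    have h1 : Integrable id (μ.map X) :=
      (integrable_map_measure aestronglyMeasurable_id hX.aemeasurable).mpr hXint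
    rw [hXX'] at h1
    exact (integrable_map_measure aestronglyMeasurable_id hX'.aemeasurable).mp h1
  have hY'int : Integrable Y' μ := by
    have h1 : Integrable id (μ.map Y) :=
      (integrable_map_measure aestronglyMeasurable_id hY.aemeasurable).mpr hYint
    rw [hYY'] at h1
    exact (integrable_map_measure aestronglyMeasurable_id hY'.aemeasurable).mp h1
  have iXY : Integrable (fun ω => |X ω - Y ω|) μ := (hXint.sub hYint).abs
  have iXX' : Integrable (fun ω => |X ω - X' ω|) μ := (hXint.sub hX'int).abs
  have iYY' : Integrable (fun ω => |Y ω - Y' ω|) μ := (hYint.sub hY'int).abs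
  set LXY := ∫⁻ ω, ENNReal.ofReal |X ω - Y ω| ∂μ with hLXY
  set LXX' := ∫⁻ ω, ENNReal.ofReal |X ω - X' ω| ∂μ with hLXX'
  set LYY' := ∫⁻ ω, ENNReal.ofReal |Y ω - Y' ω| ∂μ with hLYY'
  have hLXY_ne : LXY ≠ ⊤ :=
    ((hasFiniteIntegral_iff_ofReal (ae_of_all _ fun ω => abs_nonneg _)).mp
      iXY.hasFiniteIntegral).ne
  have hLXX'_ne : LXX' ≠ ⊤ :=
    ((hasFiniteIntegral_iff_ofReal (ae_of_all _ fun ω => abs_nonneg _)).mp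
      iXX'.hasFiniteIntegral).ne
  have hLYY'_ne : LYY' ≠ ⊤ :=
    ((hasFiniteIntegral_iff_ofReal (ae_of_all _ fun ω => abs_nonneg _)).mp
      iYY'.hasFiniteIntegral).ne
  -- key ENNReal inequality
  have key : LXX' + LYY' ≤ 2 * LXY := by
    rw [hLXY, hLXX', hLYY', lintegral_abs_sub X Y hX hY, lintegral_abs_sub X X' hX hX',
      lintegral_abs_sub Y Y' hY hY']
    have e1 : ∀ t, μ {ω | (X ω ≤ t ∧ ¬ X' ω ≤ t) ∨ (X' ω ≤ t ∧ ¬ X ω ≤ t)}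
        = μ (X ⁻¹' Iic t) * (1 - μ (X ⁻¹' Iic t)) + μ (X ⁻¹' Iic t) * (1 - μ (X ⁻¹' Iic t)) := by
      intro t
      rw [measure_xor_eq X X' hX hX' hIXX' t, hFXX' t]
    have e2 : ∀ t, μ {ω | (Y ω ≤ t ∧ ¬ Y' ω ≤ t) ∨ (Y' ω ≤ t ∧ ¬ Y ω ≤ t)}
        = μ (Y ⁻¹' Iic t) * (1 - μ (Y ⁻¹' Iic t)) + μ (Y ⁻¹' Iic t) * (1 - μ (Y ⁻¹' Iic t)) := by
      intro t
      rw [measure_xor_eq Y Y' hY hY' hIYY' t, hFYY' t]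
    have e3 : ∀ t, μ {ω | (X ω ≤ t ∧ ¬ Y ω ≤ t) ∨ (Y ω ≤ t ∧ ¬ X ω ≤ t)}
        = μ (X ⁻¹' Iic t) * (1 - μ (Y ⁻¹' Iic t)) + μ (Y ⁻¹' Iic t) * (1 - μ (X ⁻¹' Iic t)) :=
      measure_xor_eq X Y hX hY hIXY
    rw [lintegral_congr e1, lintegral_congr e2, lintegral_congr e3]
    calc (∫⁻ t, μ (X ⁻¹' Iic t) * (1 - μ (X ⁻¹' Iic t)) + μ (X ⁻¹' Iic t) * (1 - μ (X ⁻¹' Iic t)))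
          + ∫⁻ t, μ (Y ⁻¹' Iic t) * (1 - μ (Y ⁻¹' Iic t)) + μ (Y ⁻¹' Iic t) * (1 - μ (Y ⁻¹' Iic t))
        ≤ ∫⁻ t, ((μ (X ⁻¹' Iic t) * (1 - μ (X ⁻¹' Iic t)) + μ (X ⁻¹' Iic t) * (1 - μ (X ⁻¹' Iic t)))
            + (μ (Y ⁻¹' Iic t) * (1 - μ (Y ⁻¹' Iic t)) + μ (Y ⁻¹' Iic t) * (1 - μ (Y ⁻¹' Iic t)))) :=
          le_lintegral_add _ _
      _ ≤ ∫⁻ t, 2 * (μ (X ⁻¹' Iic t) * (1 - μ (Y ⁻¹' Iic t)) + μ (Y ⁻¹' Iic t) * (1 - μ (X ⁻¹' Iic t))) :=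
          lintegral_mono fun t => ennreal_key prob_le_one prob_le_one
      _ = 2 * ∫⁻ t, μ (X ⁻¹' Iic t) * (1 - μ (Y ⁻¹' Iic t)) + μ (Y ⁻¹' Iic t) * (1 - μ (X ⁻¹' Iic t)) :=
          lintegral_const_mul' _ _ (by norm_num)
  -- pass to real integrals
  have h2ne : (2:ℝ≥0∞) * LXY ≠ ⊤ := ENNReal.mul_ne_top (by norm_num) hLXY_ne
  have hreal := ENNReal.toReal_mono h2ne key
  rw [ENNReal.toReal_add hLXX'_ne hLYY'_ne, ENNReal.toReal_mul] at hreal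
  have eXY : ∫ ω, |X ω - Y ω| ∂μ = LXY.toReal :=
    integral_eq_lintegral_of_nonneg_ae (ae_of_all _ fun ω => abs_nonneg _)
      ((hX.sub hY).abs.aestronglyMeasurable)
  have eXX' : ∫ ω, |X ω - X' ω| ∂μ = LXX'.toReal :=
    integral_eq_lintegral_of_nonneg_ae (ae_of_all _ fun ω => abs_nonneg _)
      ((hX.sub hX').abs.aestronglyMeasurable)
  have eYY' : ∫ ω, |Y ω - Y' ω| ∂μ = LYY'.toReal :=
    integral_eq_lintegral_of_nonneg_ae (ae_of_all _ fun ω => abs_nonneg _)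
      ((hY.sub hY').abs.aestronglyMeasurable)
  rw [eXY, eXX', eYY']
  have : (2:ℝ≥0∞).toReal = 2 := by norm_num
  rw [this] at hreal
  linarith
end
end

section
/- For independent integrable real-valued random variables X and Y, the energy distance ℰ(X,Y) = 2E|X−Y| − E|X−X'| − E|Y−Y'| equals zero if and only if X and Y have the same distribution. -/
open MeasureTheory ProbabilityTheory
open scoped ENNReal
open Set Filter
open scoped Topology

noncomputable section

lemma stieltjes_eq_of_ae_eq {f g : StieltjesFunction ℝ}
    (h : ∀ᵐ t ∂(volume : Measure ℝ), f t = g t) (x : ℝ) : f x = g x := by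
  have hs : ∀ n : ℕ, ∃ s, s ∈ Set.Ioo x (x + 1/(n+1)) ∧ f s = g s := by
    intro n
    by_contra hcon
    push_neg at hcon
    have hsub : Set.Ioo x (x + 1/(n+1)) ⊆ {t | ¬ f t = g t} := fun s hsx => hcon s hsx
    have h0 : (volume : Measure ℝ) (Set.Ioo x (x + 1/(n+1))) = 0 :=
      measure_mono_null hsub (ae_iff.mp h)
    rw [Real.volume_Ioo] at h0
    have : (0:ℝ) < x + 1/(n+1) - x := by
      have : (0:ℝ) < 1/(n+1) := by positivity
      linarith
    simp [ENNReal.ofReal_eq_zero, not_lt.mpr this.le] at h0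
    linarith [h0]
  choose s hs1 hs2 using hs
  have hub : Tendsto (fun n : ℕ => x + 1/(n+1 : ℝ)) atTop (𝓝 x) := by
    have := tendsto_one_div_add_atTop_nhds_zero_nat (𝕜 := ℝ)
    simpa using tendsto_const_nhds.add this
  have hts : Tendsto s atTop (𝓝 x) :=
    tendsto_of_tendsto_of_tendsto_of_le_of_le tendsto_const_nhds hub
      (fun n => (hs1 n).1.le) (fun n => (hs1 n).2.le)
  have htsw : Tendsto s atTop (𝓝[Set.Ici x] x) :=
    tendsto_nhdsWithin_of_tendsto_nhds_of_eventually_within s hts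
      (Eventually.of_forall fun n => (hs1 n).1.le)
  have hf : Tendsto (fun n => f (s n)) atTop (𝓝 (f x)) :=
    (f.right_continuous x).tendsto.comp htsw
  have hg : Tendsto (fun n => f (s n)) atTop (𝓝 (g x)) := by
    have := (g.right_continuous x).tendsto.comp htsw
    refine this.congr fun n => (hs2 n).symm
  exact tendsto_nhds_unique hf hg

lemma energy_pair_lintegral {Ω : Type*} [MeasurableSpace Ω] {μ : Measure Ω}
    [IsProbabilityMeasure μ]
    (U V : Ω → ℝ) (hU : Measurable U) (hV : Measurable V)
    (hindep : IndepFun U V μ) (hUi : Integrable U μ) (hVi : Integrable V μ) :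
    ENNReal.ofReal (∫ ω, |U ω - V ω| ∂μ)
      = ∫⁻ t, (μ.map U (Iic t) * (1 - μ.map V (Iic t))
          + (1 - μ.map U (Iic t)) * μ.map V (Iic t)) := by
  classical
  set E : Set (Ω × ℝ) :=
    {q | (U q.1 ≤ q.2 ∧ q.2 < V q.1) ∨ (V q.1 ≤ q.2 ∧ q.2 < U q.1)} with hE
  have hEmeas : MeasurableSet E := by
    apply MeasurableSet.union
    · exact (measurableSet_le (hU.comp measurable_fst) measurable_snd).inter
        (measurableSet_lt measurable_snd (hV.comp measurable_fst))
    · exact (measurableSet_le (hV.comp measurable_fst) measurable_snd).inter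
        (measurableSet_lt measurable_snd (hU.comp measurable_fst))
  have hswap :
      ∫⁻ ω, ∫⁻ t, E.indicator (fun _ => (1:ℝ≥0∞)) (ω, t) ∂(volume) ∂μ
        = ∫⁻ t, ∫⁻ ω, E.indicator (fun _ => (1:ℝ≥0∞)) (ω, t) ∂μ ∂(volume) := by
    exact lintegral_lintegral_swap
      ((measurable_one.indicator hEmeas).aemeasurable)
  have hleft : ∀ ω, (∫⁻ t, E.indicator (fun _ => (1:ℝ≥0∞)) (ω, t) ∂(volume))
      = ENNReal.ofReal |U ω - V ω| := by
    intro ω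
    have hsec : ∫⁻ t, E.indicator (fun _ => (1:ℝ≥0∞)) (ω, t) ∂(volume)
        = ∫⁻ t, (Ico (min (U ω) (V ω)) (max (U ω) (V ω))).indicator
            (fun _ => (1:ℝ≥0∞)) t ∂(volume) := by
      refine lintegral_congr fun t => ?_
      have hmem : ((ω, t) ∈ E) ↔ t ∈ Ico (min (U ω) (V ω)) (max (U ω) (V ω)) := by
        simp only [hE, Set.mem_setOf_eq, Set.mem_Ico]
        constructor
        · rintro (⟨h1, h2⟩ | ⟨h1, h2⟩)
          · exact ⟨le_trans (min_le_left _ _) h1, lt_of_lt_of_le h2 (le_max_right _ _)⟩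
          · exact ⟨le_trans (min_le_right _ _) h1, lt_of_lt_of_le h2 (le_max_left _ _)⟩
        · rintro ⟨h1, h2⟩
          rcases le_total (U ω) (V ω) with h | h
          · left
            rw [min_eq_left h] at h1; rw [max_eq_right h] at h2; exact ⟨h1, h2⟩
          · right
            rw [min_eq_right h] at h1; rw [max_eq_left h] at h2; exact ⟨h1, h2⟩
      simp only [Set.indicator]
      by_cases hc : (ω, t) ∈ E
      · rw [if_pos hc, if_pos (hmem.mp hc)]
      · rw [if_neg hc, if_neg (fun hc' => hc (hmem.mpr hc'))]
    rw [hsec, lintegral_indicator measurableSet_Ico]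
    simp [Real.volume_Ico, max_sub_min_eq_abs, abs_sub_comm]
  have hright : ∀ t, (∫⁻ ω, E.indicator (fun _ => (1:ℝ≥0∞)) (ω, t) ∂μ)
      = μ.map U (Iic t) * (1 - μ.map V (Iic t))
          + (1 - μ.map U (Iic t)) * μ.map V (Iic t) := by
    intro t
    have hsec : ∫⁻ ω, E.indicator (fun _ => (1:ℝ≥0∞)) (ω, t) ∂μ
        = ∫⁻ ω, ((U ⁻¹' Iic t ∩ V ⁻¹' Ioi t) ∪ (V ⁻¹' Iic t ∩ U ⁻¹' Ioi t)).indicator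
            (fun _ => (1:ℝ≥0∞)) ω ∂μ := by
      refine lintegral_congr fun ω => ?_
      have hmem : ((ω, t) ∈ E) ↔
          ω ∈ (U ⁻¹' Iic t ∩ V ⁻¹' Ioi t) ∪ (V ⁻¹' Iic t ∩ U ⁻¹' Ioi t) := by
        simp [hE, Set.mem_setOf_eq]
      simp only [Set.indicator]
      by_cases hc : (ω, t) ∈ E
      · rw [if_pos hc, if_pos (hmem.mp hc)]
      · rw [if_neg hc, if_neg (fun hc' => hc (hmem.mpr hc'))]
    have hm1 : MeasurableSet (U ⁻¹' Iic t ∩ V ⁻¹' Ioi t) :=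
      (hU measurableSet_Iic).inter (hV measurableSet_Ioi)
    have hm2 : MeasurableSet (V ⁻¹' Iic t ∩ U ⁻¹' Ioi t) :=
      (hV measurableSet_Iic).inter (hU measurableSet_Ioi)
    have hdisj : Disjoint (U ⁻¹' Iic t ∩ V ⁻¹' Ioi t) (V ⁻¹' Iic t ∩ U ⁻¹' Ioi t) := by
      rw [Set.disjoint_left]
      rintro ω ⟨_, h2⟩ ⟨h3, _⟩
      simp only [Set.mem_preimage, Set.mem_Iic, Set.mem_Ioi] at h2 h3
      linarith
    rw [hsec, lintegral_indicator (hm1.union hm2)]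
    simp only [lintegral_one, Measure.restrict_apply_univ]
    rw [measure_union hdisj hm2]
    have e1 : μ (U ⁻¹' Iic t ∩ V ⁻¹' Ioi t) = μ (U ⁻¹' Iic t) * μ (V ⁻¹' Ioi t) :=
      hindep.measure_inter_preimage_eq_mul _ _ measurableSet_Iic measurableSet_Ioi
    have e2 : μ (V ⁻¹' Iic t ∩ U ⁻¹' Ioi t) = μ (V ⁻¹' Iic t) * μ (U ⁻¹' Ioi t) :=
      hindep.symm.measure_inter_preimage_eq_mul _ _ measurableSet_Iic measurableSet_Ioi
    have hUIoi : μ (U ⁻¹' Ioi t) = 1 - μ (U ⁻¹' Iic t) := by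
      rw [show (Ioi t) = (Iic t)ᶜ by simp, Set.preimage_compl,
        measure_compl (hU measurableSet_Iic) (measure_ne_top μ _), measure_univ]
    have hVIoi : μ (V ⁻¹' Ioi t) = 1 - μ (V ⁻¹' Iic t) := by
      rw [show (Ioi t) = (Iic t)ᶜ by simp, Set.preimage_compl,
        measure_compl (hV measurableSet_Iic) (measure_ne_top μ _), measure_univ]
    rw [e1, e2, hUIoi, hVIoi, Measure.map_apply hU measurableSet_Iic,
      Measure.map_apply hV measurableSet_Iic]
    ring
  calc ENNReal.ofReal (∫ ω, |U ω - V ω| ∂μ)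
      = ∫⁻ ω, ENNReal.ofReal |U ω - V ω| ∂μ := by
        exact ofReal_integral_eq_lintegral_ofReal (hUi.sub hVi).abs
          (ae_of_all _ fun ω => abs_nonneg _)
    _ = ∫⁻ ω, ∫⁻ t, E.indicator (fun _ => (1:ℝ≥0∞)) (ω, t) ∂(volume) ∂μ := by
        refine lintegral_congr fun ω => (hleft ω).symm
    _ = ∫⁻ t, ∫⁻ ω, E.indicator (fun _ => (1:ℝ≥0∞)) (ω, t) ∂μ ∂(volume) := hswap
    _ = _ := lintegral_congr fun t => hright t

lemma energy_pair {Ω : Type*} [MeasurableSpace Ω] {μ : Measure Ω}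
    [IsProbabilityMeasure μ]
    (U V : Ω → ℝ) (hU : Measurable U) (hV : Measurable V)
    (hindep : IndepFun U V μ) (hUi : Integrable U μ) (hVi : Integrable V μ) :
    (∫ ω, |U ω - V ω| ∂μ)
      = (∫ t, (cdf (μ.map U) t * (1 - cdf (μ.map V) t)
          + (1 - cdf (μ.map U) t) * cdf (μ.map V) t)) ∧
    Integrable (fun t => cdf (μ.map U) t * (1 - cdf (μ.map V) t)
      + (1 - cdf (μ.map U) t) * cdf (μ.map V) t) volume := by
  haveI : IsProbabilityMeasure (μ.map U) := Measure.isProbabilityMeasure_map hU.aemeasurable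
  haveI : IsProbabilityMeasure (μ.map V) := Measure.isProbabilityMeasure_map hV.aemeasurable
  have h01 : ∀ (ν : Measure ℝ) [IsProbabilityMeasure ν] (t : ℝ),
      0 ≤ cdf ν t ∧ cdf ν t ≤ 1 := fun ν _ t => ⟨cdf_nonneg ν t, cdf_le_one ν t⟩
  set h : ℝ → ℝ := fun t => cdf (μ.map U) t * (1 - cdf (μ.map V) t)
      + (1 - cdf (μ.map U) t) * cdf (μ.map V) t with hh
  have hnonneg : ∀ t, 0 ≤ h t := by
    intro t
    have h1 := h01 (μ.map U) t; have h2 := h01 (μ.map V) t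
    simp only [hh]
    nlinarith [h1.1, h1.2, h2.1, h2.2]
  have hPQ : ∀ t, μ.map U (Iic t) * (1 - μ.map V (Iic t))
      + (1 - μ.map U (Iic t)) * μ.map V (Iic t) = ENNReal.ofReal (h t) := by
    intro t
    have h1 := h01 (μ.map U) t; have h2 := h01 (μ.map V) t
    rw [← ofReal_cdf (μ.map U) t, ← ofReal_cdf (μ.map V) t]
    have e1 : (1:ℝ≥0∞) - ENNReal.ofReal (cdf (μ.map V) t)
        = ENNReal.ofReal (1 - cdf (μ.map V) t) := by
      rw [ENNReal.ofReal_sub _ h2.1, ENNReal.ofReal_one]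
    have e2 : (1:ℝ≥0∞) - ENNReal.ofReal (cdf (μ.map U) t)
        = ENNReal.ofReal (1 - cdf (μ.map U) t) := by
      rw [ENNReal.ofReal_sub _ h1.1, ENNReal.ofReal_one]
    rw [e1, e2, ← ENNReal.ofReal_mul h1.1, ← ENNReal.ofReal_mul (by linarith [h1.2]),
      ← ENNReal.ofReal_add (by nlinarith [h1.1, h1.2, h2.1, h2.2])
        (by nlinarith [h1.1, h1.2, h2.1, h2.2])]
  have hmeas : Measurable h := by
    have hcU : Measurable fun t => cdf (μ.map U) t := (cdf (μ.map U)).mono.measurable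
    have hcV : Measurable fun t => cdf (μ.map V) t := (cdf (μ.map V)).mono.measurable
    exact (hcU.mul (measurable_const.sub hcV)).add ((measurable_const.sub hcU).mul hcV)
  have key : ENNReal.ofReal (∫ ω, |U ω - V ω| ∂μ)
      = ∫⁻ t, ENNReal.ofReal (h t) := by
    rw [energy_pair_lintegral U V hU hV hindep hUi hVi]
    exact lintegral_congr hPQ
  have hfin : (∫⁻ t, ENNReal.ofReal (h t)) ≠ ⊤ := by
    rw [← key]; exact ENNReal.ofReal_ne_top
  have haem : AEMeasurable (fun t => ENNReal.ofReal (h t)) (volume : Measure ℝ) :=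
    (ENNReal.measurable_ofReal.comp hmeas).aemeasurable
  have hint : Integrable h volume := by
    have := integrable_toReal_of_lintegral_ne_top haem hfin
    refine this.congr (Eventually.of_forall fun t => ?_)
    exact ENNReal.toReal_ofReal (hnonneg t)
  have heq : ∫ ω, |U ω - V ω| ∂μ = ∫ t, h t := by
    have h1 := integral_toReal haem (Eventually.of_forall fun t => ENNReal.ofReal_lt_top)
    rw [← key, ENNReal.toReal_ofReal (integral_nonneg fun ω => abs_nonneg _)] at h1
    rw [← h1]
    exact integral_congr_ae (Eventually.of_forall fun t =>
      ENNReal.toReal_ofReal (hnonneg t))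
  exact ⟨heq, hint⟩

theorem energy_distance_eq_zero_iff
    {Ω : Type*} [MeasurableSpace Ω] {μ : Measure Ω} [IsProbabilityMeasure μ]
    (X X' Y Y' : Ω → ℝ)
    (hX : Measurable X) (hX' : Measurable X') (hY : Measurable Y) (hY' : Measurable Y')
    (hindep : iIndepFun ![X, X', Y, Y'] μ)
    (hXX' : μ.map X = μ.map X') (hYY' : μ.map Y = μ.map Y')
    (hXint : Integrable X μ) (hYint : Integrable Y μ) :
    2 * (∫ ω, |X ω - Y ω| ∂μ) - (∫ ω, |X ω - X' ω| ∂μ) - (∫ ω, |Y ω - Y' ω| ∂μ) = 0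
      ↔ μ.map X = μ.map Y := by
  haveI hpX : IsProbabilityMeasure (μ.map X) := Measure.isProbabilityMeasure_map hX.aemeasurable
  haveI hpY : IsProbabilityMeasure (μ.map Y) := Measure.isProbabilityMeasure_map hY.aemeasurable
  have iXY : IndepFun X Y μ := by
    simpa using hindep.indepFun (show (0 : Fin 4) ≠ 2 by decide)
  have iXX' : IndepFun X X' μ := by
    simpa using hindep.indepFun (show (0 : Fin 4) ≠ 1 by decide)
  have iYY' : IndepFun Y Y' μ := by
    simpa using hindep.indepFun (show (2 : Fin 4) ≠ 3 by decide)
  have hX'int : Integrable X' μ := by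
    have h1 : Integrable id (μ.map X) :=
      (integrable_map_measure aestronglyMeasurable_id hX.aemeasurable).mpr hXint
    rw [hXX'] at h1
    exact (integrable_map_measure aestronglyMeasurable_id hX'.aemeasurable).mp h1
  have hY'int : Integrable Y' μ := by
    have h1 : Integrable id (μ.map Y) :=
      (integrable_map_measure aestronglyMeasurable_id hY.aemeasurable).mpr hYint
    rw [hYY'] at h1
    exact (integrable_map_measure aestronglyMeasurable_id hY'.aemeasurable).mp h1
  have hA := energy_pair X Y hX hY iXY hXint hYint
  have hB := energy_pair X X' hX hX' iXX' hXint hX'int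
  have hC := energy_pair Y Y' hY hY' iYY' hYint hY'int
  rw [← hXX'] at hB
  rw [← hYY'] at hC
  set P : ℝ → ℝ := fun t => cdf (μ.map X) t with hP
  set Q : ℝ → ℝ := fun t => cdf (μ.map Y) t with hQ
  set eA : ℝ → ℝ := fun t => P t * (1 - Q t) + (1 - P t) * Q t with heA
  set eB : ℝ → ℝ := fun t => P t * (1 - P t) + (1 - P t) * P t with heB
  set eC : ℝ → ℝ := fun t => Q t * (1 - Q t) + (1 - Q t) * Q t with heC
  have hDeq : (fun t => 2 * (P t - Q t)^2) = fun t => 2 * eA t - eB t - eC t := by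
    funext t; simp only [heA, heB, heC]; ring
  have hDint : Integrable (fun t => 2 * (P t - Q t)^2) volume := by
    rw [hDeq]
    exact ((hA.2.const_mul 2).sub hB.2).sub hC.2
  have i1 : Integrable (fun t => 2 * eA t) volume := hA.2.const_mul 2
  have i2 : Integrable (fun t => 2 * eA t - eB t) volume := i1.sub hB.2
  have hmain : (∫ t, 2 * (P t - Q t)^2)
      = 2 * (∫ t, eA t) - (∫ t, eB t) - (∫ t, eC t) := by
    rw [hDeq]
    rw [integral_sub i2 hC.2, integral_sub i1 hB.2, integral_const_mul]
  rw [hA.1, hB.1, hC.1, ← hmain]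
  constructor
  · intro h0
    have hae : (fun t => 2 * (P t - Q t)^2) =ᵐ[(volume : Measure ℝ)] 0 :=
      (integral_eq_zero_iff_of_nonneg (fun t => by positivity) hDint).mp h0
    have hae2 : ∀ᵐ t ∂(volume : Measure ℝ), cdf (μ.map X) t = cdf (μ.map Y) t := by
      filter_upwards [hae] with t ht
      simp only [Pi.zero_apply] at ht
      have h2 : (P t - Q t)^2 = 0 := by linarith
      have h3 : P t - Q t = 0 := by
        exact pow_eq_zero_iff (by norm_num) |>.mp h2
      simp only [hP, hQ] at h3
      linarith
    have hcdf : cdf (μ.map X) = cdf (μ.map Y) :=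
      StieltjesFunction.ext (stieltjes_eq_of_ae_eq hae2)
    exact Measure.eq_of_cdf _ _ hcdf
  · intro h
    simp only [hP, hQ, heA, heB, heC, h]
    simp
end
end

section
/- For independent integrable real-valued random variables X and Y with characteristic functions φ_X and φ_Y, the energy distance satisfies ℰ(X,Y) = ∫_{−∞}^{∞} |φ_X(t) − φ_Y(t)|² / (π t²) dt. -/
open MeasureTheory ProbabilityTheory Real Complex
open scoped ENNReal

noncomputable section

section Helpers
open Set Filter
open scoped Topology

lemma integrableOn_cexp {c : ℂ} (hc : c.re < 0) :
    IntegrableOn (fun x : ℝ => Complex.exp (c * x)) (Ioi 0) := by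
  have h := exp_neg_integrableOn_Ioi (a := 0) (b := -c.re) (by linarith)
  refine h.integrable.mono' ?_ ?_
  · exact (Complex.continuous_exp.comp (continuous_const.mul Complex.continuous_ofReal)).aestronglyMeasurable.restrict
  · filter_upwards with x
    show ‖Complex.exp (c * x)‖ ≤ _
    rw [Complex.norm_exp, neg_neg]
    simp [Complex.mul_re]

lemma laplace_exp {c : ℂ} (hc : c.re < 0) :
    ∫ x in Ioi (0:ℝ), Complex.exp (c * x) = -c⁻¹ := by
  have hc0 : c ≠ 0 := fun h => by simp [h] at hc
  have key := intervalIntegral_tendsto_integral_Ioi 0 (integrableOn_cexp hc) tendsto_id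
  have heval : ∀ T : ℝ, ∫ x in (0:ℝ)..T, Complex.exp (c * x) =
      (Complex.exp (c * T) - 1) / c := by
    intro T
    rw [integral_exp_mul_complex hc0]
    simp
  have h1 : Tendsto (fun T : ℝ => Complex.exp (c * T)) atTop (𝓝 0) := by
    rw [tendsto_zero_iff_norm_tendsto_zero]
    have he : ∀ T : ℝ, ‖Complex.exp (c * T)‖ = Real.exp (c.re * T) := by
      intro T; rw [Complex.norm_exp]; simp [Complex.mul_re]
    simp_rw [he]
    exact Real.tendsto_exp_atBot.comp (tendsto_id.const_mul_atTop_of_neg hc)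
  have h2 : Tendsto (fun T : ℝ => (Complex.exp (c * T) - 1) / c) atTop (𝓝 (-c⁻¹)) := by
    have h3 := (h1.sub (tendsto_const_nhds (x := (1:ℂ)))).div_const c
    rw [zero_sub, neg_div, one_div] at h3
    exact h3
  simp_rw [heval, id] at key h2 ⊢
  exact tendsto_nhds_unique key h2


lemma integrableOn_exp_neg_cos {s : ℝ} (hs : 0 < s) :
    IntegrableOn (fun x : ℝ => (1 - Real.cos x) * Real.exp (-(s*x))) (Ioi 0) := by
  have h := (exp_neg_integrableOn_Ioi (a := 0) (b := s) hs).integrable.const_mul 2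
  refine h.mono' ?_ ?_
  · exact (((continuous_const.sub Real.continuous_cos).mul
      (Real.continuous_exp.comp (continuous_const.mul continuous_id).neg)).aestronglyMeasurable.restrict)
  · filter_upwards with x
    rw [norm_mul, Real.norm_eq_abs (Real.exp _), Real.abs_exp, Real.norm_eq_abs]
    rw [neg_mul s x]
    refine mul_le_mul_of_nonneg_right ?_ (exp_nonneg _)
    rw [abs_le]; constructor <;> nlinarith [Real.neg_one_le_cos x, Real.cos_le_one x]

lemma integral_exp_neg_Ioi' {s : ℝ} (hs : 0 < s) :
    ∫ x in Ioi (0:ℝ), Real.exp (-(s*x)) = 1/s := by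
  have hc : ((-s : ℝ) : ℂ).re < 0 := by simpa using hs
  have hre := integral_re (integrableOn_cexp hc)
  simp only [RCLike.re_to_complex] at hre
  rw [laplace_exp hc] at hre
  have h2 : ((-(↑(-s : ℝ))⁻¹ : ℂ)).re = 1/s := by
    rw [← Complex.ofReal_inv, ← Complex.ofReal_neg, Complex.ofReal_re]
    field_simp
  rw [← h2, ← hre]
  refine setIntegral_congr_fun measurableSet_Ioi (fun x _ => ?_)
  rw [← Complex.ofReal_mul, Complex.exp_ofReal_re]
  ring_nf

lemma integral_exp_neg_cos_Ioi {s : ℝ} (hs : 0 < s) :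
    ∫ x in Ioi (0:ℝ), Real.exp (-(s*x)) * Real.cos x = s/(s^2+1) := by
  set c : ℂ := -s + Complex.I with hcdef
  have hcre : c.re = -s := by simp [hcdef]
  have hcim : c.im = 1 := by simp [hcdef]
  have hc : c.re < 0 := by rw [hcre]; linarith
  have hre := integral_re (integrableOn_cexp hc)
  simp only [RCLike.re_to_complex] at hre
  rw [laplace_exp hc] at hre
  have h1 : ∀ x : ℝ, (Complex.exp (c * x)).re = Real.exp (-(s*x)) * Real.cos x := by
    intro x
    rw [Complex.exp_re]
    congr 1
    · congr 1; simp [Complex.mul_re, hcre, hcim]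
    · congr 1; simp [Complex.mul_im, hcre, hcim]
  have h2 : (-c⁻¹).re = s/(s^2+1) := by
    rw [Complex.neg_re, Complex.inv_re, Complex.normSq_apply, hcre, hcim,
      show -s * -s + 1 * 1 = s^2+1 by ring, neg_div, neg_neg]
  rw [← h2, ← hre]
  exact setIntegral_congr_fun measurableSet_Ioi (fun x _ => (h1 x).symm)

lemma integral_one_sub_cos_mul_exp {s : ℝ} (hs : 0 < s) :
    ∫ x in Ioi (0:ℝ), (1 - Real.cos x) * Real.exp (-(s*x)) = 1/s - s/(s^2+1) := by
  have hexp := exp_neg_integrableOn_Ioi (a := 0) (b := s) hs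
  have hcos : IntegrableOn (fun x : ℝ => Real.exp (-(s*x)) * Real.cos x) (Ioi 0) := by
    refine hexp.integrable.mono' ?_ ?_
    · exact ((Real.continuous_exp.comp (continuous_const.mul continuous_id).neg).mul
        Real.continuous_cos).aestronglyMeasurable.restrict
    · filter_upwards with x
      rw [norm_mul, Real.norm_eq_abs (Real.exp _), Real.abs_exp, Real.norm_eq_abs, neg_mul s x]
      simpa using mul_le_of_le_one_right (exp_nonneg (-(s*x))) (Real.abs_cos_le_one x)
  have : ∀ x : ℝ, (1 - Real.cos x) * Real.exp (-(s*x))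
      = Real.exp (-(s*x)) - Real.exp (-(s*x)) * Real.cos x := by intro x; ring
  simp_rw [this]
  simp_rw [neg_mul] at hexp
  rw [integral_sub hexp.integrable hcos, integral_exp_neg_Ioi' hs, integral_exp_neg_cos_Ioi hs]

lemma integrableOn_mul_exp_neg {x : ℝ} (hx : 0 < x) :
    IntegrableOn (fun s : ℝ => s * Real.exp (-(x*s))) (Ioi 0) := by
  have h := integrableOn_rpow_mul_exp_neg_mul_rpow (p := 1) (s := 1) (b := x)
    (by norm_num) one_pos hx
  refine h.congr_fun (fun s hs => ?_) measurableSet_Ioi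
  simp [Real.rpow_one, neg_mul]

lemma integral_mul_exp_neg {x : ℝ} (hx : 0 < x) :
    ∫ s in Ioi (0:ℝ), s * Real.exp (-(x*s)) = 1/x^2 := by
  have h := Real.integral_rpow_mul_exp_neg_mul_Ioi (a := 2) (r := x) (by norm_num) hx
  rw [show (2:ℝ)-1 = 1 by norm_num] at h
  simp_rw [Real.rpow_one] at h
  rw [h, Real.Gamma_two]
  rw [Real.rpow_two]
  ring

lemma lintegral_one_sub_cos_div_sq_Ioi :
    ∫⁻ x in Ioi (0:ℝ), ENNReal.ofReal ((1 - Real.cos x)/x^2) = ENNReal.ofReal (π/2) := by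
  set F : ℝ → ℝ → ℝ≥0∞ := fun x s => ENNReal.ofReal ((1 - Real.cos x) * (s * Real.exp (-(x*s))))
    with hF
  have claim1 : ∀ x ∈ Ioi (0:ℝ), ∫⁻ s in Ioi (0:ℝ), F x s = ENNReal.ofReal ((1 - Real.cos x)/x^2) := by
    intro x hx
    have hc : (0:ℝ) ≤ 1 - Real.cos x := by nlinarith [Real.cos_le_one x]
    have h1 : ∀ s, F x s = ENNReal.ofReal (1 - Real.cos x) * ENNReal.ofReal (s * Real.exp (-(x*s))) := by
      intro s; simp only [hF]; exact ENNReal.ofReal_mul hc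
    simp_rw [h1]
    rw [lintegral_const_mul' _ _ ENNReal.ofReal_ne_top,
      ← ofReal_integral_eq_lintegral_ofReal (integrableOn_mul_exp_neg hx)
        ((ae_restrict_iff' measurableSet_Ioi).2 (Filter.Eventually.of_forall
          (fun s hs => mul_nonneg (le_of_lt hs) (exp_nonneg _)))),
      integral_mul_exp_neg hx, ← ENNReal.ofReal_mul hc]
    congr 1
    field_simp
  have claim2 : ∀ s ∈ Ioi (0:ℝ), ∫⁻ x in Ioi (0:ℝ), F x s = ENNReal.ofReal (1/(1+s^2)) := by
    intro s hs
    have hs' : (0:ℝ) < s := hs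
    have h1 : ∀ x, F x s = ENNReal.ofReal s * ENNReal.ofReal ((1 - Real.cos x) * Real.exp (-(s*x))) := by
      intro x
      simp only [hF]
      rw [← ENNReal.ofReal_mul hs'.le]
      congr 1
      ring_nf
    simp_rw [h1]
    rw [lintegral_const_mul' _ _ ENNReal.ofReal_ne_top,
      ← ofReal_integral_eq_lintegral_ofReal (integrableOn_exp_neg_cos hs')
        ((ae_restrict_iff' measurableSet_Ioi).2 (Filter.Eventually.of_forall
          (fun x _ => mul_nonneg (by nlinarith [Real.cos_le_one x]) (exp_nonneg _)))),
      integral_one_sub_cos_mul_exp hs', ← ENNReal.ofReal_mul hs'.le]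
    congr 1
    field_simp
    ring
  calc ∫⁻ x in Ioi (0:ℝ), ENNReal.ofReal ((1 - Real.cos x)/x^2)
      = ∫⁻ x in Ioi (0:ℝ), ∫⁻ s in Ioi (0:ℝ), F x s := (setLIntegral_congr_fun measurableSet_Ioi
        (fun x hx => (claim1 x hx).symm))
    _ = ∫⁻ s in Ioi (0:ℝ), ∫⁻ x in Ioi (0:ℝ), F x s := by
        refine lintegral_lintegral_swap ?_
        refine (ENNReal.measurable_ofReal.comp ?_).aemeasurable
        apply Measurable.mul
        · exact (measurable_const.sub (Real.continuous_cos.measurable.comp measurable_fst))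
        · exact (measurable_snd.mul ((measurable_fst.mul measurable_snd).neg.exp))
    _ = ∫⁻ s in Ioi (0:ℝ), ENNReal.ofReal (1/(1+s^2)) := (setLIntegral_congr_fun measurableSet_Ioi
        (fun s hs => claim2 s hs))
    _ = ENNReal.ofReal (π/2) := by
        rw [← ofReal_integral_eq_lintegral_ofReal
          (by simp only [one_div]; exact integrable_inv_one_add_sq.integrableOn)
          ((ae_restrict_iff' measurableSet_Ioi).2 (Filter.Eventually.of_forall
            (fun s _ => by positivity)))]
        congr 1
        simp_rw [one_div]
        rw [integral_Ioi_inv_one_add_sq]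
        simp

lemma kernel_nonneg (a t : ℝ) : 0 ≤ (1 - Real.cos (t*a))/(π*t^2) := by
  apply div_nonneg
  · nlinarith [Real.cos_le_one (t*a)]
  · positivity

lemma kernel0_nonneg (t : ℝ) : 0 ≤ (1 - Real.cos t)/t^2 := by
  apply div_nonneg
  · nlinarith [Real.cos_le_one t]
  · positivity

lemma kernel0_measurable : Measurable fun x : ℝ => (1 - Real.cos x)/x^2 :=
  (measurable_const.sub Real.measurable_cos).div (measurable_id.pow_const 2)

lemma integrableOn_kernel0_Ioi : IntegrableOn (fun x : ℝ => (1 - Real.cos x)/x^2) (Ioi 0) := by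
  refine (lintegral_ofReal_ne_top_iff_integrable
    kernel0_measurable.aestronglyMeasurable.restrict
    (Filter.Eventually.of_forall kernel0_nonneg)).mp ?_
  rw [lintegral_one_sub_cos_div_sq_Ioi]
  exact ENNReal.ofReal_ne_top

lemma integral_kernel0_Ioi : ∫ x in Ioi (0:ℝ), (1 - Real.cos x)/x^2 = π/2 := by
  have h := ofReal_integral_eq_lintegral_ofReal integrableOn_kernel0_Ioi
    (Filter.Eventually.of_forall kernel0_nonneg)
  rw [lintegral_one_sub_cos_div_sq_Ioi] at h
  have h2 : (0:ℝ) ≤ ∫ x in Ioi (0:ℝ), (1 - Real.cos x)/x^2 :=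
    setIntegral_nonneg measurableSet_Ioi (fun x _ => kernel0_nonneg x)
  exact (ENNReal.ofReal_eq_ofReal_iff h2 (by positivity)).mp h

lemma integrable_kernel0 : Integrable (fun x : ℝ => (1 - Real.cos x)/x^2) := by
  have int_Iic : IntegrableOn (fun x : ℝ => (1 - Real.cos x)/x^2) (Iic 0) := by
    rw [IntegrableOn, ← Measure.map_neg_eq_self (volume : Measure ℝ)]
    have m : MeasurableEmbedding fun x : ℝ => -x := (Homeomorph.neg ℝ).measurableEmbedding
    show IntegrableOn _ _ (Measure.map (fun x : ℝ => -x) volume)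
    rw [m.integrableOn_map_iff]
    have : ((fun x : ℝ => (1 - Real.cos x)/x^2) ∘ fun x : ℝ => -x)
        = fun x : ℝ => (1 - Real.cos x)/x^2 := by
      funext x; simp [Function.comp, Real.cos_neg]
    rw [this]
    simp_rw [neg_preimage, neg_Iic, neg_zero]
    exact (integrableOn_Ici_iff_integrableOn_Ioi).mpr integrableOn_kernel0_Ioi
  rw [← integrableOn_univ, ← Iic_union_Ioi (a := (0:ℝ))]
  exact int_Iic.union integrableOn_kernel0_Ioi

lemma integral_kernel0 : ∫ x : ℝ, (1 - Real.cos x)/x^2 = π := by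
  have h : (fun x : ℝ => (1 - Real.cos x)/x^2)
      = fun x : ℝ => (1 - Real.cos |x|)/(|x|)^2 := by
    funext x; rw [Real.cos_abs, _root_.sq_abs]
  calc ∫ x : ℝ, (1 - Real.cos x)/x^2
      = ∫ x : ℝ, (1 - Real.cos |x|)/(|x|)^2 := by rw [← h]
    _ = 2 * ∫ x in Ioi (0:ℝ), (1 - Real.cos x)/x^2 :=
        integral_comp_abs (f := fun x => (1 - Real.cos x)/x^2)
    _ = π := by rw [integral_kernel0_Ioi]; ring

lemma integrable_kernel (a : ℝ) :
    Integrable (fun t : ℝ => (1 - Real.cos (t*a))/(π*t^2)) := by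
  rcases eq_or_ne a 0 with rfl | ha
  · simpa using integrable_const (0:ℝ)
  · have h : (fun t : ℝ => (1 - Real.cos (t*a))/(π*t^2))
        = fun t : ℝ => (a^2/π) * ((1 - Real.cos (a*t))/(a*t)^2) := by
      funext t
      rcases eq_or_ne t 0 with rfl | ht
      · simp
      · field_simp
    rw [h]
    exact (integrable_kernel0.comp_mul_left' ha).const_mul _

lemma integral_kernel (a : ℝ) :
    ∫ t : ℝ, (1 - Real.cos (t*a))/(π*t^2) = |a| := by
  rcases eq_or_ne a 0 with rfl | ha
  · simp
  · have h : (fun t : ℝ => (1 - Real.cos (t*a))/(π*t^2))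
        = fun t : ℝ => (a^2/π) * ((1 - Real.cos (a*t))/(a*t)^2) := by
      funext t
      rcases eq_or_ne t 0 with rfl | ht
      · simp
      · field_simp
    rw [h]
    rw [integral_const_mul]
    have := Measure.integral_comp_mul_left (fun x : ℝ => (1 - Real.cos x)/x^2) a
    rw [this, integral_kernel0, smul_eq_mul]
    rw [abs_inv, ← _root_.sq_abs a]
    field_simp

lemma lintegral_kernel (a : ℝ) :
    ∫⁻ t : ℝ, ENNReal.ofReal ((1 - Real.cos (t*a))/(π*t^2)) = ENNReal.ofReal |a| := by
  rw [← ofReal_integral_eq_lintegral_ofReal (integrable_kernel a)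
    (Filter.Eventually.of_forall (kernel_nonneg a)), integral_kernel]

section Pair
variable {Ω : Type*} [MeasurableSpace Ω] {μ : Measure Ω} [IsProbabilityMeasure μ]

lemma integrable_of_bounded {f : Ω → ℝ} (hf : Measurable f) {C : ℝ} (h : ∀ ω, |f ω| ≤ C) :
    Integrable f μ := by
  refine (integrable_const C).mono' hf.aestronglyMeasurable ?_
  filter_upwards with ω
  simpa using h ω

lemma one_sub_cos_le (u : ℝ) : |1 - Real.cos u| ≤ 2 := by
  rw [abs_le]; constructor <;> nlinarith [Real.neg_one_le_cos u, Real.cos_le_one u]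

lemma integrable_one_sub_cos {W : Ω → ℝ} (hW : Measurable W) (t : ℝ) :
    Integrable (fun ω => 1 - Real.cos (t * W ω)) μ :=
  integrable_of_bounded (measurable_const.sub ((measurable_const.mul hW).cos))
    (fun ω => one_sub_cos_le _)

lemma g_nonneg {W : Ω → ℝ} (t : ℝ) : 0 ≤ ∫ ω, (1 - Real.cos (t * W ω)) ∂μ :=
  integral_nonneg (fun ω => by show (0:ℝ) ≤ _; nlinarith [Real.cos_le_one (t * W ω)])

lemma g_measurable {W : Ω → ℝ} (hW : Measurable W) :
    Measurable (fun t => ∫ ω, (1 - Real.cos (t * W ω)) ∂μ) := by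
  have : StronglyMeasurable (fun p : ℝ × Ω => 1 - Real.cos (p.1 * W p.2)) :=
    (measurable_const.sub ((measurable_fst.mul (hW.comp measurable_snd)).cos)).stronglyMeasurable
  exact this.integral_prod_right'.measurable

lemma lintegral_G {W : Ω → ℝ} (hW : Measurable W) (hWint : Integrable W μ) :
    ∫⁻ t : ℝ, ENNReal.ofReal ((∫ ω, (1 - Real.cos (t * W ω)) ∂μ) / (π * t^2))
      = ENNReal.ofReal (∫ ω, |W ω| ∂μ) := by
  set H : ℝ → Ω → ℝ≥0∞ := fun t ω => ENNReal.ofReal ((1 - Real.cos (t * W ω))/(π*t^2)) with hH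
  have hHmeas : Measurable (Function.uncurry H) := by
    apply ENNReal.measurable_ofReal.comp
    exact (measurable_const.sub ((measurable_fst.mul (hW.comp measurable_snd)).cos)).div
      (measurable_const.mul (measurable_fst.pow_const 2))
  have inner_t : ∀ t : ℝ, ∫⁻ ω, H t ω ∂μ
      = ENNReal.ofReal ((∫ ω, (1 - Real.cos (t * W ω)) ∂μ) / (π * t^2)) := by
    intro t
    have h1 : ∀ ω, H t ω = ENNReal.ofReal (1/(π*t^2)) * ENNReal.ofReal (1 - Real.cos (t * W ω)) := by
      intro ω
      rw [hH, ← ENNReal.ofReal_mul (by positivity)]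
      congr 1
      ring
    simp_rw [h1]
    rw [lintegral_const_mul' _ _ ENNReal.ofReal_ne_top,
      ← ofReal_integral_eq_lintegral_ofReal (integrable_one_sub_cos hW t)
        (Filter.Eventually.of_forall (fun ω => by
          simpa using (by nlinarith [Real.cos_le_one (t * W ω)] : (0:ℝ) ≤ 1 - Real.cos (t * W ω)))),
      ← ENNReal.ofReal_mul (by positivity)]
    congr 1
    ring
  have inner_ω : ∀ ω, (∫⁻ t : ℝ, H t ω) = ENNReal.ofReal |W ω| := by
    intro ω
    rw [hH]
    exact lintegral_kernel (W ω)
  calc ∫⁻ t : ℝ, ENNReal.ofReal ((∫ ω, (1 - Real.cos (t * W ω)) ∂μ) / (π * t^2))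
      = ∫⁻ t : ℝ, ∫⁻ ω, H t ω ∂μ := by simp_rw [inner_t]
    _ = ∫⁻ ω, (∫⁻ t : ℝ, H t ω) ∂μ := lintegral_lintegral_swap hHmeas.aemeasurable
    _ = ∫⁻ ω, ENNReal.ofReal |W ω| ∂μ := by simp_rw [inner_ω]
    _ = ENNReal.ofReal (∫ ω, |W ω| ∂μ) := by
        rw [← ofReal_integral_eq_lintegral_ofReal hWint.abs
          (Filter.Eventually.of_forall (fun ω => abs_nonneg _))]

lemma G_integrable {W : Ω → ℝ} (hW : Measurable W) (hWint : Integrable W μ) :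
    Integrable (fun t : ℝ => (∫ ω, (1 - Real.cos (t * W ω)) ∂μ) / (π * t^2)) := by
  refine (lintegral_ofReal_ne_top_iff_integrable
    (((g_measurable hW).div (by fun_prop : Measurable fun t : ℝ => π * t^2)).aestronglyMeasurable)
    (Filter.Eventually.of_forall (fun t => div_nonneg (g_nonneg t) (by positivity)))).mp ?_
  simp only [Pi.div_apply]
  rw [lintegral_G hW hWint]
  exact ENNReal.ofReal_ne_top

lemma G_integral {W : Ω → ℝ} (hW : Measurable W) (hWint : Integrable W μ) :
    ∫ t : ℝ, (∫ ω, (1 - Real.cos (t * W ω)) ∂μ) / (π * t^2) = ∫ ω, |W ω| ∂μ := by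
  have h := ofReal_integral_eq_lintegral_ofReal (G_integrable hW hWint)
    (Filter.Eventually.of_forall (fun t => div_nonneg (g_nonneg t) (by positivity)))
  rw [lintegral_G hW hWint] at h
  refine (ENNReal.ofReal_eq_ofReal_iff ?_ ?_).mp h
  · exact integral_nonneg (fun t => div_nonneg (g_nonneg t) (by positivity))
  · exact integral_nonneg (fun ω => abs_nonneg _)

end Pair

section Phi
variable {Ω : Type*} [MeasurableSpace Ω] {μ : Measure Ω} [IsProbabilityMeasure μ]

lemma integrable_cexp {Z : Ω → ℝ} (hZ : Measurable Z) (t : ℝ) :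
    Integrable (fun ω => Complex.exp (Complex.I * (t * Z ω))) μ := by
  refine (integrable_const (1:ℝ)).mono' ?_ ?_
  · exact (Complex.measurable_exp.comp (measurable_const.mul
      ((Complex.measurable_ofReal.comp hZ).const_mul t))).aestronglyMeasurable
  · filter_upwards with ω
    rw [show Complex.I * (t * Z ω) = (((t * Z ω : ℝ)) : ℂ) * Complex.I by push_cast; ring]
    rw [Complex.norm_exp_ofReal_mul_I]

lemma phi_re {Z : Ω → ℝ} (hZ : Measurable Z) (t : ℝ) :
    (∫ ω, Complex.exp (Complex.I * (t * Z ω)) ∂μ).re = ∫ ω, Real.cos (t * Z ω) ∂μ := by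
  have h := integral_re (integrable_cexp (μ := μ) hZ t)
  simp only [RCLike.re_to_complex] at h
  rw [← h]
  refine integral_congr_ae (Filter.Eventually.of_forall (fun ω => ?_))
  show (Complex.exp (Complex.I * (t * Z ω))).re = Real.cos (t * Z ω)
  rw [show Complex.I * (t * Z ω) = (((t * Z ω : ℝ)) : ℂ) * Complex.I by push_cast; ring,
    Complex.exp_ofReal_mul_I_re]

lemma phi_im {Z : Ω → ℝ} (hZ : Measurable Z) (t : ℝ) :
    (∫ ω, Complex.exp (Complex.I * (t * Z ω)) ∂μ).im = ∫ ω, Real.sin (t * Z ω) ∂μ := by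
  have h := integral_im (integrable_cexp (μ := μ) hZ t)
  simp only [RCLike.im_to_complex] at h
  rw [← h]
  refine integral_congr_ae (Filter.Eventually.of_forall (fun ω => ?_))
  show (Complex.exp (Complex.I * (t * Z ω))).im = Real.sin (t * Z ω)
  rw [show Complex.I * (t * Z ω) = (((t * Z ω : ℝ)) : ℂ) * Complex.I by push_cast; ring,
    Complex.exp_ofReal_mul_I_im]

lemma integrable_cos' {Z : Ω → ℝ} (hZ : Measurable Z) (t : ℝ) :
    Integrable (fun ω => Real.cos (t * Z ω)) μ :=
  integrable_of_bounded ((measurable_const.mul hZ).cos) (fun ω => Real.abs_cos_le_one _)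

lemma integrable_sin' {Z : Ω → ℝ} (hZ : Measurable Z) (t : ℝ) :
    Integrable (fun ω => Real.sin (t * Z ω)) μ :=
  integrable_of_bounded ((measurable_const.mul hZ).sin) (fun ω => Real.abs_sin_le_one _)

lemma g_eq_of_indep {U V : Ω → ℝ} (hU : Measurable U) (hV : Measurable V)
    (hUV : ProbabilityTheory.IndepFun U V μ) (t : ℝ) :
    ∫ ω, (1 - Real.cos (t * (U ω - V ω))) ∂μ
      = 1 - ((∫ ω, Real.cos (t * U ω) ∂μ) * (∫ ω, Real.cos (t * V ω) ∂μ)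
           + (∫ ω, Real.sin (t * U ω) ∂μ) * (∫ ω, Real.sin (t * V ω) ∂μ)) := by
  have hcc : Integrable (fun ω => Real.cos (t * U ω) * Real.cos (t * V ω)) μ :=
    integrable_of_bounded (((measurable_const.mul hU).cos).mul ((measurable_const.mul hV).cos))
      (fun ω => by
        rw [abs_mul]
        exact mul_le_one₀ (Real.abs_cos_le_one _) (abs_nonneg _) (Real.abs_cos_le_one _))
  have hss : Integrable (fun ω => Real.sin (t * U ω) * Real.sin (t * V ω)) μ :=
    integrable_of_bounded (((measurable_const.mul hU).sin).mul ((measurable_const.mul hV).sin))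
      (fun ω => by
        rw [abs_mul]
        exact mul_le_one₀ (Real.abs_sin_le_one _) (abs_nonneg _) (Real.abs_sin_le_one _))
  have hpt : ∀ ω, 1 - Real.cos (t * (U ω - V ω))
      = 1 - (Real.cos (t * U ω) * Real.cos (t * V ω) + Real.sin (t * U ω) * Real.sin (t * V ω)) := by
    intro ω
    rw [mul_sub, Real.cos_sub]
  simp_rw [hpt]
  have hadd : Integrable (fun ω => Real.cos (t * U ω) * Real.cos (t * V ω)
      + Real.sin (t * U ω) * Real.sin (t * V ω)) μ := hcc.add hss
  rw [integral_sub (integrable_const 1) hadd, integral_const, integral_add hcc hss]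
  have hfc : ProbabilityTheory.IndepFun (fun ω => Real.cos (t * U ω)) (fun ω => Real.cos (t * V ω)) μ :=
    hUV.comp ((measurable_const.mul measurable_id).cos) ((measurable_const.mul measurable_id).cos)
  have hfs : ProbabilityTheory.IndepFun (fun ω => Real.sin (t * U ω)) (fun ω => Real.sin (t * V ω)) μ :=
    hUV.comp ((measurable_const.mul measurable_id).sin) ((measurable_const.mul measurable_id).sin)
  have h1 := hfc.integral_mul_eq_mul_integral (integrable_cos' hU t).aestronglyMeasurable (integrable_cos' hV t).aestronglyMeasurable
  have h2 := hfs.integral_mul_eq_mul_integral (integrable_sin' hU t).aestronglyMeasurable (integrable_sin' hV t).aestronglyMeasurable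
  simp only [Pi.mul_apply] at h1 h2
  rw [h1, h2]
  simp

end Phi

end Helpers

theorem energy_distance_eq_charFun_integral
    {Ω : Type*} [MeasurableSpace Ω] {μ : Measure Ω} [IsProbabilityMeasure μ]
    (X X' Y Y' : Ω → ℝ)
    (hX : Measurable X) (hX' : Measurable X') (hY : Measurable Y) (hY' : Measurable Y')
    (hindep : iIndepFun ![X, X', Y, Y'] μ)
    (hXX' : μ.map X = μ.map X') (hYY' : μ.map Y = μ.map Y')
    (hXint : Integrable X μ) (hYint : Integrable Y μ)
    (φX φY : ℝ → ℂ)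
    (hφX : ∀ t, φX t = ∫ ω, Complex.exp (Complex.I * (t * X ω)) ∂μ)
    (hφY : ∀ t, φY t = ∫ ω, Complex.exp (Complex.I * (t * Y ω)) ∂μ) :
    2 * (∫ ω, |X ω - Y ω| ∂μ) - (∫ ω, |X ω - X' ω| ∂μ) - (∫ ω, |Y ω - Y' ω| ∂μ)
      = ∫ t : ℝ, ‖φX t - φY t‖ ^ 2 / (π * t ^ 2) := by

  -- integrability of the copies
  have hX'int : Integrable X' μ := by
    have h1 : Integrable id (μ.map X) := by
      rw [integrable_map_measure aestronglyMeasurable_id hX.aemeasurable]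
      simpa [Function.comp] using hXint
    rw [hXX', integrable_map_measure aestronglyMeasurable_id hX'.aemeasurable] at h1
    simpa [Function.comp] using h1
  have hY'int : Integrable Y' μ := by
    have h1 : Integrable id (μ.map Y) := by
      rw [integrable_map_measure aestronglyMeasurable_id hY.aemeasurable]
      simpa [Function.comp] using hYint
    rw [hYY', integrable_map_measure aestronglyMeasurable_id hY'.aemeasurable] at h1
    simpa [Function.comp] using h1
  -- pairwise independence
  have hXY : ProbabilityTheory.IndepFun X Y μ := by
    simpa using hindep.indepFun (i := 0) (j := 2) (by decide)
  have hXX'i : ProbabilityTheory.IndepFun X X' μ := by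
    simpa using hindep.indepFun (i := 0) (j := 1) (by decide)
  have hYY'i : ProbabilityTheory.IndepFun Y Y' μ := by
    simpa using hindep.indepFun (i := 2) (j := 3) (by decide)
  -- transfer of laws
  have hmapC : ∀ t : ℝ, ∫ ω, Real.cos (t * X' ω) ∂μ = ∫ ω, Real.cos (t * X ω) ∂μ := by
    intro t
    rw [← integral_map (f := fun x : ℝ => Real.cos (t * x)) hX'.aemeasurable ((Real.continuous_cos.comp (continuous_const.mul continuous_id)).aestronglyMeasurable), ← hXX',
      integral_map (f := fun x : ℝ => Real.cos (t * x)) hX.aemeasurable ((Real.continuous_cos.comp (continuous_const.mul continuous_id)).aestronglyMeasurable)]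
  have hmapS : ∀ t : ℝ, ∫ ω, Real.sin (t * X' ω) ∂μ = ∫ ω, Real.sin (t * X ω) ∂μ := by
    intro t
    rw [← integral_map (f := fun x : ℝ => Real.sin (t * x)) hX'.aemeasurable ((Real.continuous_sin.comp (continuous_const.mul continuous_id)).aestronglyMeasurable), ← hXX',
      integral_map (f := fun x : ℝ => Real.sin (t * x)) hX.aemeasurable ((Real.continuous_sin.comp (continuous_const.mul continuous_id)).aestronglyMeasurable)]
  have hmapCY : ∀ t : ℝ, ∫ ω, Real.cos (t * Y' ω) ∂μ = ∫ ω, Real.cos (t * Y ω) ∂μ := by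
    intro t
    rw [← integral_map (f := fun x : ℝ => Real.cos (t * x)) hY'.aemeasurable ((Real.continuous_cos.comp (continuous_const.mul continuous_id)).aestronglyMeasurable), ← hYY',
      integral_map (f := fun x : ℝ => Real.cos (t * x)) hY.aemeasurable ((Real.continuous_cos.comp (continuous_const.mul continuous_id)).aestronglyMeasurable)]
  have hmapSY : ∀ t : ℝ, ∫ ω, Real.sin (t * Y' ω) ∂μ = ∫ ω, Real.sin (t * Y ω) ∂μ := by
    intro t
    rw [← integral_map (f := fun x : ℝ => Real.sin (t * x)) hY'.aemeasurable ((Real.continuous_sin.comp (continuous_const.mul continuous_id)).aestronglyMeasurable), ← hYY',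
      integral_map (f := fun x : ℝ => Real.sin (t * x)) hY.aemeasurable ((Real.continuous_sin.comp (continuous_const.mul continuous_id)).aestronglyMeasurable)]
  -- the three `g` computations
  have gXY : ∀ t : ℝ, ∫ ω, (1 - Real.cos (t * (X ω - Y ω))) ∂μ
      = 1 - ((∫ ω, Real.cos (t * X ω) ∂μ) * (∫ ω, Real.cos (t * Y ω) ∂μ)
           + (∫ ω, Real.sin (t * X ω) ∂μ) * (∫ ω, Real.sin (t * Y ω) ∂μ)) :=
    fun t => g_eq_of_indep hX hY hXY t
  have gXX : ∀ t : ℝ, ∫ ω, (1 - Real.cos (t * (X ω - X' ω))) ∂μ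
      = 1 - ((∫ ω, Real.cos (t * X ω) ∂μ) * (∫ ω, Real.cos (t * X ω) ∂μ)
           + (∫ ω, Real.sin (t * X ω) ∂μ) * (∫ ω, Real.sin (t * X ω) ∂μ)) := by
    intro t
    rw [g_eq_of_indep hX hX' hXX'i t, hmapC t, hmapS t]
  have gYY : ∀ t : ℝ, ∫ ω, (1 - Real.cos (t * (Y ω - Y' ω))) ∂μ
      = 1 - ((∫ ω, Real.cos (t * Y ω) ∂μ) * (∫ ω, Real.cos (t * Y ω) ∂μ)
           + (∫ ω, Real.sin (t * Y ω) ∂μ) * (∫ ω, Real.sin (t * Y ω) ∂μ)) := by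
    intro t
    rw [g_eq_of_indep hY hY' hYY'i t, hmapCY t, hmapSY t]
  -- φ real/imaginary parts
  have hφXre : ∀ t : ℝ, (φX t).re = ∫ ω, Real.cos (t * X ω) ∂μ := by
    intro t; rw [hφX t]; exact phi_re hX t
  have hφXim : ∀ t : ℝ, (φX t).im = ∫ ω, Real.sin (t * X ω) ∂μ := by
    intro t; rw [hφX t]; exact phi_im hX t
  have hφYre : ∀ t : ℝ, (φY t).re = ∫ ω, Real.cos (t * Y ω) ∂μ := by
    intro t; rw [hφY t]; exact phi_re hY t
  have hφYim : ∀ t : ℝ, (φY t).im = ∫ ω, Real.sin (t * Y ω) ∂μ := by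
    intro t; rw [hφY t]; exact phi_im hY t
  -- pointwise identity
  have key : ∀ t : ℝ, ‖φX t - φY t‖ ^ 2 / (π * t ^ 2)
      = 2 * ((∫ ω, (1 - Real.cos (t * (X ω - Y ω))) ∂μ) / (π * t^2))
        - ((∫ ω, (1 - Real.cos (t * (X ω - X' ω))) ∂μ) / (π * t^2))
        - ((∫ ω, (1 - Real.cos (t * (Y ω - Y' ω))) ∂μ) / (π * t^2)) := by
    intro t
    rw [gXY t, gXX t, gYY t]
    have habs : ‖φX t - φY t‖ ^ 2
        = ((φX t).re - (φY t).re)^2 + ((φX t).im - (φY t).im)^2 := by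
      rw [Complex.sq_norm, Complex.normSq_apply, Complex.sub_re, Complex.sub_im]; ring
    rw [habs, hφXre t, hφXim t, hφYre t, hφYim t]
    ring
  -- integral identities from the Tonelli part
  have e1 : ∫ ω, |X ω - Y ω| ∂μ
      = ∫ t : ℝ, (∫ ω, (1 - Real.cos (t * (X ω - Y ω))) ∂μ) / (π * t^2) :=
    (G_integral (hX.sub hY) (hXint.sub hYint)).symm
  have e2 : ∫ ω, |X ω - X' ω| ∂μ
      = ∫ t : ℝ, (∫ ω, (1 - Real.cos (t * (X ω - X' ω))) ∂μ) / (π * t^2) :=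
    (G_integral (hX.sub hX') (hXint.sub hX'int)).symm
  have e3 : ∫ ω, |Y ω - Y' ω| ∂μ
      = ∫ t : ℝ, (∫ ω, (1 - Real.cos (t * (Y ω - Y' ω))) ∂μ) / (π * t^2) :=
    (G_integral (hY.sub hY') (hYint.sub hY'int)).symm
  have i1 : Integrable (fun t : ℝ => (∫ ω, (1 - Real.cos (t * (X ω - Y ω))) ∂μ) / (π * t^2)) :=
    G_integrable (hX.sub hY) (hXint.sub hYint)
  have i2 : Integrable (fun t : ℝ => (∫ ω, (1 - Real.cos (t * (X ω - X' ω))) ∂μ) / (π * t^2)) :=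
    G_integrable (hX.sub hX') (hXint.sub hX'int)
  have i3 : Integrable (fun t : ℝ => (∫ ω, (1 - Real.cos (t * (Y ω - Y' ω))) ∂μ) / (π * t^2)) :=
    G_integrable (hY.sub hY') (hYint.sub hY'int)
  have i4 : Integrable (fun t : ℝ => 2 * ((∫ ω, (1 - Real.cos (t * (X ω - Y ω))) ∂μ) / (π * t^2))) :=
    i1.const_mul 2
  have i5 : Integrable (fun t : ℝ =>
      2 * ((∫ ω, (1 - Real.cos (t * (X ω - Y ω))) ∂μ) / (π * t^2))
        - (∫ ω, (1 - Real.cos (t * (X ω - X' ω))) ∂μ) / (π * t^2)) := i4.sub i2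
  rw [e1, e2, e3]
  rw [show (∫ t : ℝ, ‖φX t - φY t‖ ^ 2 / (π * t ^ 2))
      = ∫ t : ℝ, (2 * ((∫ ω, (1 - Real.cos (t * (X ω - Y ω))) ∂μ) / (π * t^2))
        - ((∫ ω, (1 - Real.cos (t * (X ω - X' ω))) ∂μ) / (π * t^2))
        - ((∫ ω, (1 - Real.cos (t * (Y ω - Y' ω))) ∂μ) / (π * t^2)))
      from integral_congr_ae (Filter.Eventually.of_forall key)]
  rw [integral_sub i5 i3, integral_sub i4 i2, integral_const_mul]
end
end

section
/- For independent real-valued random variables X and Y with E|X|^α + E|Y|^α < ∞ for some α ∈ (0,2), the generalized energy distance ℰ(X,Y;α) = 2E|X−Y|^α − E|X−X'|^α − E|Y−Y'|^α is finite and nonnegative. -/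
open MeasureTheory ProbabilityTheory Real Set
open scoped ENNReal

noncomputable section

lemma lintegral_Ioi_comp_mul_left {c : ℝ} (hc : 0 < c) (f : ℝ → ℝ≥0∞) (hf : Measurable f) :
    ∫⁻ t in Ioi (0:ℝ), f (c * t) = ENNReal.ofReal c⁻¹ * ∫⁻ t in Ioi (0:ℝ), f t := by
  have hpre : (fun t => c * t) ⁻¹' (Ioi (0:ℝ)) = Ioi 0 := by
    ext t
    simp only [mem_preimage, mem_Ioi]
    constructor
    · intro h; nlinarith
    · intro h; exact mul_pos hc h
  have hmap : Measure.map (fun t => c * t) (volume.restrict (Ioi (0:ℝ)))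
      = ENNReal.ofReal c⁻¹ • volume.restrict (Ioi (0:ℝ)) := by
    conv_lhs => rw [← hpre]
    rw [← Measure.restrict_map (measurable_const_mul c) measurableSet_Ioi,
      Real.map_volume_mul_left hc.ne', Measure.restrict_smul, abs_of_pos (inv_pos.mpr hc)]
  calc ∫⁻ t in Ioi (0:ℝ), f (c * t)
      = ∫⁻ y, f y ∂(Measure.map (fun t => c * t) (volume.restrict (Ioi (0:ℝ)))) :=
        (lintegral_map hf (measurable_const_mul c)).symm
    _ = ENNReal.ofReal c⁻¹ * ∫⁻ t in Ioi (0:ℝ), f t := by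
        rw [hmap, lintegral_smul_measure, smul_eq_mul]

open MeasureTheory ProbabilityTheory Real Set
open scoped ENNReal

noncomputable section

def eJ (α x : ℝ) : ℝ≥0∞ :=
  ∫⁻ t in Ioi (0:ℝ), ENNReal.ofReal ((1 - Real.cos (t * x)) * t ^ (-1 - α))

lemma eJ_meas_aux (α x : ℝ) :
    Measurable (fun t : ℝ => ENNReal.ofReal ((1 - Real.cos (t * x)) * t ^ (-1 - α))) := by
  apply ENNReal.measurable_ofReal.comp
  measurability

lemma eJ_scale {α : ℝ} (hα : 0 < α) (x : ℝ) :
    eJ α x = ENNReal.ofReal (|x| ^ α) * eJ α 1 := by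
  rcases eq_or_ne x 0 with rfl | hx
  · simp [eJ, Real.zero_rpow hα.ne', abs_zero]
  have hc : 0 < |x| := abs_pos.mpr hx
  set c := |x| with hcdef
  -- the substituted function
  set f : ℝ → ℝ≥0∞ := fun s => ENNReal.ofReal ((1 - Real.cos s) * (s * c⁻¹) ^ (-1 - α)) with hf
  have hfm : Measurable f := by
    apply ENNReal.measurable_ofReal.comp
    measurability
  have h1 : eJ α x = ∫⁻ t in Ioi (0:ℝ), f (c * t) := by
    rw [eJ]
    apply setLIntegral_congr_fun measurableSet_Ioi
    intro t ht
    have h2 : Real.cos (t * x) = Real.cos (c * t) := by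
      rw [hcdef, ← Real.cos_abs (t * x), ← Real.cos_abs (|x| * t), abs_mul, abs_mul,
        abs_abs, abs_of_pos ht, mul_comm]
    have h3 : c * t * c⁻¹ = t := by field_simp
    rw [hf]; simp only [h3, h2]
  have h4 : ∫⁻ t in Ioi (0:ℝ), f t
      = ENNReal.ofReal (c ^ (1 + α)) * eJ α 1 := by
    rw [eJ, ← lintegral_const_mul' _ _ ENNReal.ofReal_ne_top]
    apply setLIntegral_congr_fun measurableSet_Ioi
    intro t ht
    have h5 : (t * c⁻¹) ^ (-1 - α) = t ^ (-1 - α) * c ^ (1 + α) := by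
      rw [Real.mul_rpow ht.le (inv_nonneg.mpr hc.le), Real.inv_rpow hc.le,
        show (-1 - α) = -(1 + α) by ring, Real.rpow_neg hc.le, inv_inv]
    rw [hf]
    simp only [mul_one, h5]
    rw [← ENNReal.ofReal_mul (Real.rpow_nonneg hc.le _)]
    ring_nf
  have h6 : ENNReal.ofReal c⁻¹ * ENNReal.ofReal (c ^ (1 + α)) = ENNReal.ofReal (c ^ α) := by
    rw [← ENNReal.ofReal_mul (inv_nonneg.mpr hc.le), ← Real.rpow_neg_one c,
      ← Real.rpow_add hc, show -1 + (1 + α) = α by ring]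
  rw [h1, lintegral_Ioi_comp_mul_left hc f hfm, h4, ← mul_assoc, h6]

lemma eJ_ne_top {α : ℝ} (hα : α ∈ Set.Ioo (0:ℝ) 2) : eJ α 1 ≠ ⊤ := by
  obtain ⟨hα0, hα2⟩ := hα
  have hsplit : (Ioi (0:ℝ)) = Ioc (0:ℝ) 1 ∪ Ioi 1 := (Ioc_union_Ioi_eq_Ioi zero_le_one).symm
  rw [eJ, hsplit, lintegral_union measurableSet_Ioi (Ioc_disjoint_Ioi le_rfl)]
  have hfin1 : ∫⁻ t in Ioc (0:ℝ) 1,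
      ENNReal.ofReal ((1 - Real.cos (t * 1)) * t ^ (-1 - α)) < ⊤ := by
    have hint : IntegrableOn (fun t : ℝ => (1/2) * t ^ (1 - α)) (Ioc (0:ℝ) 1) := by
      apply Integrable.const_mul
      exact ((intervalIntegral.integrableOn_Ioo_rpow_iff zero_lt_one).mpr (by linarith)).congr_set_ae
        Ioo_ae_eq_Ioc.symm
    refine lt_of_le_of_lt (setLIntegral_mono ?_ ?_) hint.lintegral_lt_top
    · exact ENNReal.measurable_ofReal.comp (by measurability)
    · intro t ht
      apply ENNReal.ofReal_le_ofReal
      have h1 : 1 - Real.cos (t * 1) ≤ t ^ 2 / 2 := by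
        have := Real.one_sub_sq_div_two_le_cos (x := t * 1)
        nlinarith
      have h2 : (0:ℝ) < t ^ (-1 - α) := Real.rpow_pos_of_pos ht.1 _
      have h3 : (t ^ 2 / 2) * t ^ (-1 - α) = (1/2) * t ^ (1 - α) := by
        rw [div_mul_eq_mul_div, ← Real.rpow_natCast t 2, ← Real.rpow_add ht.1]
        rw [show ((2:ℕ):ℝ) + (-1 - α) = 1 - α by push_cast; ring]; ring
      calc (1 - Real.cos (t * 1)) * t ^ (-1 - α) ≤ (t ^ 2 / 2) * t ^ (-1 - α) := by
            apply mul_le_mul_of_nonneg_right h1 h2.le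
        _ = (1/2) * t ^ (1 - α) := h3
  have hfin2 : ∫⁻ t in Ioi (1:ℝ),
      ENNReal.ofReal ((1 - Real.cos (t * 1)) * t ^ (-1 - α)) < ⊤ := by
    have hint : IntegrableOn (fun t : ℝ => 2 * t ^ (-1 - α)) (Ioi (1:ℝ)) :=
      Integrable.const_mul ((integrableOn_Ioi_rpow_iff zero_lt_one).mpr (by linarith)) 2
    refine lt_of_le_of_lt (setLIntegral_mono ?_ ?_) hint.lintegral_lt_top
    · exact ENNReal.measurable_ofReal.comp (by measurability)
    · intro t ht
      apply ENNReal.ofReal_le_ofReal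
      have h2 : (0:ℝ) < t ^ (-1 - α) := Real.rpow_pos_of_pos (by linarith [mem_Ioi.mp ht]) _
      have := Real.neg_one_le_cos (t * 1)
      nlinarith
  exact (ENNReal.add_lt_top.mpr ⟨hfin1, hfin2⟩).ne

lemma eJ_ne_zero {α : ℝ} (hα : α ∈ Set.Ioo (0:ℝ) 2) : eJ α 1 ≠ 0 := by
  obtain ⟨hα0, hα2⟩ := hα
  have hcos1 : Real.cos 1 < 1 := by
    refine lt_of_le_of_ne (Real.cos_le_one 1) ?_
    intro h
    have hpi := Real.pi_gt_three
    have := (Real.cos_eq_one_iff_of_lt_of_lt (x := 1) (by linarith) (by linarith)).mp h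
    norm_num at this
  set c : ℝ≥0∞ := ENNReal.ofReal ((1 - Real.cos 1) * 2 ^ (-1 - α)) with hc
  have hcpos : 0 < c := by
    rw [hc]
    apply ENNReal.ofReal_pos.mpr
    have := Real.rpow_pos_of_pos (y := -1 - α) two_pos
    nlinarith
  have hlow : c ≤ eJ α 1 := by
    have hsub : ∫⁻ t in Ioc (1:ℝ) 2,
        ENNReal.ofReal ((1 - Real.cos (t * 1)) * t ^ (-1 - α)) ≤ eJ α 1 := by
      rw [eJ]
      exact lintegral_mono_set (fun t ht => lt_trans one_pos ht.1)
    refine le_trans ?_ hsub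
    have hconst : ∫⁻ _ in Ioc (1:ℝ) 2, c = c := by
      rw [setLIntegral_const, Real.volume_Ioc]
      norm_num
    rw [← hconst]
    refine setLIntegral_mono (ENNReal.measurable_ofReal.comp (by measurability)) ?_
    intro t ht
    apply ENNReal.ofReal_le_ofReal
    have hpi := Real.pi_gt_three
    have hcost : Real.cos (t * 1) ≤ Real.cos 1 := by
      rw [mul_one]
      exact Real.cos_le_cos_of_nonneg_of_le_pi zero_le_one (by linarith [ht.2]) ht.1.le
    have hrp : (2:ℝ) ^ (-1 - α) ≤ t ^ (-1 - α) :=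
      Real.rpow_le_rpow_of_nonpos (by linarith [ht.1]) ht.2 (by linarith)
    have h1 : (0:ℝ) < t ^ (-1 - α) := Real.rpow_pos_of_pos (by linarith [ht.1]) _
    nlinarith
  exact fun h => (hcpos.trans_le hlow).ne' (h ▸ rfl)

lemma eJ_tonelli {α : ℝ} (hα : α ∈ Set.Ioo (0:ℝ) 2) {Ω : Type*} [MeasurableSpace Ω]
    (μ : Measure Ω) [IsProbabilityMeasure μ] (Z : Ω → ℝ) (hZ : Measurable Z) :
    ∫⁻ t in Ioi (0:ℝ),
        ENNReal.ofReal (t ^ (-1 - α)) * ∫⁻ ω, ENNReal.ofReal (1 - Real.cos (t * Z ω)) ∂μ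
      = (∫⁻ ω, ENNReal.ofReal (|Z ω| ^ α) ∂μ) * eJ α 1 := by
  have m2 : Measurable (Function.uncurry fun (t : ℝ) (ω : Ω) =>
      ENNReal.ofReal (t ^ (-1 - α)) * ENNReal.ofReal (1 - Real.cos (t * Z ω))) := by
    apply Measurable.mul (f := fun p : ℝ × Ω => ENNReal.ofReal (p.1 ^ (-1 - α)))
      (g := fun p : ℝ × Ω => ENNReal.ofReal (1 - Real.cos (p.1 * Z p.2)))
    · exact ENNReal.measurable_ofReal.comp (show Measurable fun p : ℝ × Ω => p.1 ^ (-1 - α) by measurability)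
    · exact ENNReal.measurable_ofReal.comp
        ((Real.measurable_cos.comp ((measurable_fst).mul (hZ.comp measurable_snd))).const_sub 1)
  calc ∫⁻ t in Ioi (0:ℝ),
        ENNReal.ofReal (t ^ (-1 - α)) * ∫⁻ ω, ENNReal.ofReal (1 - Real.cos (t * Z ω)) ∂μ
      = ∫⁻ t in Ioi (0:ℝ), ∫⁻ ω,
          ENNReal.ofReal (t ^ (-1 - α)) * ENNReal.ofReal (1 - Real.cos (t * Z ω)) ∂μ := by
        refine lintegral_congr fun t => (lintegral_const_mul' _ _ ENNReal.ofReal_ne_top).symm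
    _ = ∫⁻ ω, ∫⁻ t in Ioi (0:ℝ),
          ENNReal.ofReal (t ^ (-1 - α)) * ENNReal.ofReal (1 - Real.cos (t * Z ω)) ∂volume ∂μ :=
        lintegral_lintegral_swap m2.aemeasurable
    _ = ∫⁻ ω, ENNReal.ofReal (|Z ω| ^ α) * eJ α 1 ∂μ := by
        refine lintegral_congr fun ω => ?_
        rw [← eJ_scale hα.1 (Z ω), eJ]
        refine setLIntegral_congr_fun measurableSet_Ioi ?_
        intro t ht
        dsimp only
        rw [← ENNReal.ofReal_mul (Real.rpow_nonneg ht.le _), mul_comm (t ^ (-1-α))]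
    _ = (∫⁻ ω, ENNReal.ofReal (|Z ω| ^ α) ∂μ) * eJ α 1 := by
        exact lintegral_mul_const _ (ENNReal.measurable_ofReal.comp (by measurability))

lemma abs_sub_rpow_le {α : ℝ} (hα : 0 < α) (x y : ℝ) :
    |x - y| ^ α ≤ 2 ^ α * (|x| ^ α + |y| ^ α) := by
  have h1 : |x - y| ≤ |x| + |y| := abs_sub _ _
  have h2 : |x| + |y| ≤ 2 * max |x| |y| := by
    rcases le_total |x| |y| with h | h
    · rw [max_eq_right h]; linarith
    · rw [max_eq_left h]; linarith
  have hmn : (0:ℝ) ≤ max |x| |y| := le_trans (abs_nonneg x) (le_max_left _ _)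
  calc |x - y| ^ α ≤ (2 * max |x| |y|) ^ α :=
        Real.rpow_le_rpow (abs_nonneg _) (h1.trans h2) hα.le
    _ = 2 ^ α * (max |x| |y|) ^ α := Real.mul_rpow (by norm_num) hmn
    _ ≤ 2 ^ α * (|x| ^ α + |y| ^ α) := by
        apply mul_le_mul_of_nonneg_left _ (Real.rpow_nonneg (by norm_num) α)
        rcases le_total |x| |y| with h | h
        · rw [max_eq_right h]
          exact le_add_of_nonneg_left (Real.rpow_nonneg (abs_nonneg _) _)
        · rw [max_eq_left h]
          exact le_add_of_nonneg_right (Real.rpow_nonneg (abs_nonneg _) _)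

lemma integrable_rpow_abs_sub {α : ℝ} (hα : 0 < α) {Ω : Type*} [MeasurableSpace Ω]
    {μ : Measure Ω} [IsProbabilityMeasure μ] {U V : Ω → ℝ}
    (hU : Measurable U) (hV : Measurable V)
    (hUm : Integrable (fun ω => |U ω| ^ α) μ) (hVm : Integrable (fun ω => |V ω| ^ α) μ) :
    Integrable (fun ω => |U ω - V ω| ^ α) μ := by
  have hm : Measurable (fun ω => |U ω - V ω| ^ α) := by measurability
  refine Integrable.mono' ((hUm.add hVm).const_mul (2 ^ α)) hm.aestronglyMeasurable
    (ae_of_all _ fun ω => ?_)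
  rw [Real.norm_eq_abs, abs_of_nonneg (Real.rpow_nonneg (abs_nonneg _) _)]
  exact abs_sub_rpow_le hα _ _

lemma integrable_of_abs_le_one {Ω : Type*} [MeasurableSpace Ω]
    {μ : Measure Ω} [IsProbabilityMeasure μ] {f : Ω → ℝ}
    (hf : Measurable f) (hb : ∀ ω, |f ω| ≤ 1) : Integrable f μ :=
  (integrable_const (1:ℝ)).mono' hf.aestronglyMeasurable (ae_of_all _ fun ω => by
    rw [Real.norm_eq_abs]; exact hb ω)

lemma expect_one_sub_cos {Ω : Type*} [MeasurableSpace Ω]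
    {μ : Measure Ω} [IsProbabilityMeasure μ] (t : ℝ) {U V : Ω → ℝ}
    (hU : Measurable U) (hV : Measurable V) (h : ProbabilityTheory.IndepFun U V μ) :
    ∫ ω, (1 - Real.cos (t * (U ω - V ω))) ∂μ
      = 1 - ((∫ ω, Real.cos (t * U ω) ∂μ) * (∫ ω, Real.cos (t * V ω) ∂μ)
            + (∫ ω, Real.sin (t * U ω) ∂μ) * (∫ ω, Real.sin (t * V ω) ∂μ)) := by
  have mcos : Measurable (fun x : ℝ => Real.cos (t * x)) :=
    Real.measurable_cos.comp (measurable_const_mul t)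
  have msin : Measurable (fun x : ℝ => Real.sin (t * x)) :=
    Real.measurable_sin.comp (measurable_const_mul t)
  have icU : Integrable (fun ω => Real.cos (t * U ω)) μ :=
    integrable_of_abs_le_one (mcos.comp hU) (fun ω => Real.abs_cos_le_one _)
  have icV : Integrable (fun ω => Real.cos (t * V ω)) μ :=
    integrable_of_abs_le_one (mcos.comp hV) (fun ω => Real.abs_cos_le_one _)
  have isU : Integrable (fun ω => Real.sin (t * U ω)) μ :=
    integrable_of_abs_le_one (msin.comp hU) (fun ω => Real.abs_sin_le_one _)
  have isV : Integrable (fun ω => Real.sin (t * V ω)) μ :=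
    integrable_of_abs_le_one (msin.comp hV) (fun ω => Real.abs_sin_le_one _)
  have hcc := (h.comp mcos mcos).integral_fun_mul_eq_mul_integral icU.aestronglyMeasurable icV.aestronglyMeasurable
  have hss := (h.comp msin msin).integral_fun_mul_eq_mul_integral isU.aestronglyMeasurable isV.aestronglyMeasurable
  have hcc' : ∫ a, Real.cos (t * U a) * Real.cos (t * V a) ∂μ
      = (∫ ω, Real.cos (t * U ω) ∂μ) * ∫ ω, Real.cos (t * V ω) ∂μ := hcc
  have hss' : ∫ a, Real.sin (t * U a) * Real.sin (t * V a) ∂μ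
      = (∫ ω, Real.sin (t * U ω) ∂μ) * ∫ ω, Real.sin (t * V ω) ∂μ := hss
  have heq : ∀ ω, Real.cos (t * (U ω - V ω))
      = Real.cos (t * U ω) * Real.cos (t * V ω) + Real.sin (t * U ω) * Real.sin (t * V ω) := by
    intro ω; rw [mul_sub, Real.cos_sub]
  have hicos : Integrable (fun ω => Real.cos (t * (U ω - V ω))) μ :=
    integrable_of_abs_le_one (mcos.comp (hU.sub hV)) (fun ω => Real.abs_cos_le_one _)
  calc ∫ ω, (1 - Real.cos (t * (U ω - V ω))) ∂μ
      = ∫ ω, (1:ℝ) ∂μ - ∫ ω, Real.cos (t * (U ω - V ω)) ∂μ :=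
        integral_sub (integrable_const 1) hicos
    _ = 1 - ∫ ω, (Real.cos (t * U ω) * Real.cos (t * V ω)
          + Real.sin (t * U ω) * Real.sin (t * V ω)) ∂μ := by
        simp only [integral_const, measure_univ, probReal_univ, ENNReal.toReal_one, smul_eq_mul, mul_one]
        congr 1
        exact integral_congr_ae (ae_of_all _ heq)
    _ = _ := by
        have iccp : Integrable (fun ω => Real.cos (t * U ω) * Real.cos (t * V ω)) μ :=
          integrable_of_abs_le_one ((mcos.comp hU).mul (mcos.comp hV)) (fun ω => by
            rw [abs_mul]
            exact mul_le_one₀ (Real.abs_cos_le_one _) (abs_nonneg _) (Real.abs_cos_le_one _))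
        have issp : Integrable (fun ω => Real.sin (t * U ω) * Real.sin (t * V ω)) μ :=
          integrable_of_abs_le_one ((msin.comp hU).mul (msin.comp hV)) (fun ω => by
            rw [abs_mul]
            exact mul_le_one₀ (Real.abs_sin_le_one _) (abs_nonneg _) (Real.abs_sin_le_one _))
        rw [integral_add iccp issp, hcc', hss']

theorem generalized_energy_distance_finite_nonneg
    {Ω : Type*} [MeasurableSpace Ω] {μ : Measure Ω} [IsProbabilityMeasure μ]
    (α : ℝ) (hα : α ∈ Set.Ioo (0 : ℝ) 2)
    (X X' Y Y' : Ω → ℝ)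
    (hX : Measurable X) (hX' : Measurable X') (hY : Measurable Y) (hY' : Measurable Y')
    (hindep : iIndepFun ![X, X', Y, Y'] μ)
    (hXX' : μ.map X = μ.map X') (hYY' : μ.map Y = μ.map Y')
    (hXmom : Integrable (fun ω => |X ω| ^ α) μ) (hYmom : Integrable (fun ω => |Y ω| ^ α) μ) :
    (Integrable (fun ω => |X ω - Y ω| ^ α) μ ∧
     Integrable (fun ω => |X ω - X' ω| ^ α) μ ∧
     Integrable (fun ω => |Y ω - Y' ω| ^ α) μ) ∧
    0 ≤ 2 * (∫ ω, |X ω - Y ω| ^ α ∂μ) - (∫ ω, |X ω - X' ω| ^ α ∂μ)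
        - ∫ ω, |Y ω - Y' ω| ^ α ∂μ := by
  obtain ⟨hα0, hα2⟩ := id hα
  have habs : Measurable (fun x : ℝ => |x| ^ α) := by measurability
  have hX'mom : Integrable (fun ω => |X' ω| ^ α) μ := by
    have h1 : Integrable (fun x : ℝ => |x| ^ α) (μ.map X) :=
      (integrable_map_measure habs.aestronglyMeasurable hX.aemeasurable).mpr hXmom
    rw [hXX'] at h1
    exact (integrable_map_measure habs.aestronglyMeasurable hX'.aemeasurable).mp h1
  have hY'mom : Integrable (fun ω => |Y' ω| ^ α) μ := by
    have h1 : Integrable (fun x : ℝ => |x| ^ α) (μ.map Y) :=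
      (integrable_map_measure habs.aestronglyMeasurable hY.aemeasurable).mpr hYmom
    rw [hYY'] at h1
    exact (integrable_map_measure habs.aestronglyMeasurable hY'.aemeasurable).mp h1
  have hintXY : Integrable (fun ω => |X ω - Y ω| ^ α) μ :=
    integrable_rpow_abs_sub hα0 hX hY hXmom hYmom
  have hintXX' : Integrable (fun ω => |X ω - X' ω| ^ α) μ :=
    integrable_rpow_abs_sub hα0 hX hX' hXmom hX'mom
  have hintYY' : Integrable (fun ω => |Y ω - Y' ω| ^ α) μ :=
    integrable_rpow_abs_sub hα0 hY hY' hYmom hY'mom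
  refine ⟨⟨hintXY, hintXX', hintYY'⟩, ?_⟩
  -- independence of pairs
  have iXY : ProbabilityTheory.IndepFun X Y μ :=
    hindep.indepFun (show (0 : Fin 4) ≠ 2 by decide)
  have iXX' : ProbabilityTheory.IndepFun X X' μ :=
    hindep.indepFun (show (0 : Fin 4) ≠ 1 by decide)
  have iYY' : ProbabilityTheory.IndepFun Y Y' μ :=
    hindep.indepFun (show (2 : Fin 4) ≠ 3 by decide)
  -- characteristic function identities
  have hcharX : ∀ g : ℝ → ℝ, Measurable g → ∫ ω, g (X' ω) ∂μ = ∫ ω, g (X ω) ∂μ := by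
    intro g hg
    rw [← integral_map hX'.aemeasurable hg.aestronglyMeasurable, ← hXX',
      integral_map hX.aemeasurable hg.aestronglyMeasurable]
  have hcharY : ∀ g : ℝ → ℝ, Measurable g → ∫ ω, g (Y' ω) ∂μ = ∫ ω, g (Y ω) ∂μ := by
    intro g hg
    rw [← integral_map hY'.aemeasurable hg.aestronglyMeasurable, ← hYY',
      integral_map hY.aemeasurable hg.aestronglyMeasurable]
  -- integrability and nonnegativity of 1 - cos integrals
  have hiW : ∀ (t : ℝ) (W : Ω → ℝ), Measurable W →
      Integrable (fun ω => 1 - Real.cos (t * W ω)) μ := by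
    intro t W hW
    refine (integrable_const (2:ℝ)).mono'
      ((Real.measurable_cos.comp (hW.const_mul t)).const_sub 1).aestronglyMeasurable
      (ae_of_all _ fun ω => ?_)
    rw [Real.norm_eq_abs, abs_le]
    constructor
    · have := Real.cos_le_one (t * W ω); linarith
    · have := Real.neg_one_le_cos (t * W ω); linarith
  have hnn : ∀ (t : ℝ) (W : Ω → ℝ), 0 ≤ ∫ ω, (1 - Real.cos (t * W ω)) ∂μ := by
    intro t W
    refine integral_nonneg fun ω => ?_
    have := Real.cos_le_one (t * W ω); simp; linarith
  -- the pointwise (in t) inequality, ENNReal version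
  have hptE : ∀ t : ℝ,
      (∫⁻ ω, ENNReal.ofReal (1 - Real.cos (t * (X ω - X' ω))) ∂μ)
      + (∫⁻ ω, ENNReal.ofReal (1 - Real.cos (t * (Y ω - Y' ω))) ∂μ)
      ≤ 2 * ∫⁻ ω, ENNReal.ofReal (1 - Real.cos (t * (X ω - Y ω))) ∂μ := by
    intro t
    have mcos : Measurable (fun x : ℝ => Real.cos (t * x)) :=
      Real.measurable_cos.comp (measurable_const_mul t)
    have msin : Measurable (fun x : ℝ => Real.sin (t * x)) :=
      Real.measurable_sin.comp (measurable_const_mul t)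
    have eA := expect_one_sub_cos t hX hY iXY
    have eB := expect_one_sub_cos t hX hX' iXX'
    have eC := expect_one_sub_cos t hY hY' iYY'
    rw [hcharX (fun x => Real.cos (t * x)) mcos, hcharX (fun x => Real.sin (t * x)) msin] at eB
    rw [hcharY (fun x => Real.cos (t * x)) mcos, hcharY (fun x => Real.sin (t * x)) msin] at eC
    have hBC : (∫ ω, (1 - Real.cos (t * (X ω - X' ω))) ∂μ)
        + (∫ ω, (1 - Real.cos (t * (Y ω - Y' ω))) ∂μ)
        ≤ 2 * ∫ ω, (1 - Real.cos (t * (X ω - Y ω))) ∂μ := by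
      rw [eA, eB, eC]
      nlinarith [sq_nonneg ((∫ ω, Real.cos (t * X ω) ∂μ) - ∫ ω, Real.cos (t * Y ω) ∂μ),
        sq_nonneg ((∫ ω, Real.sin (t * X ω) ∂μ) - ∫ ω, Real.sin (t * Y ω) ∂μ)]
    have hB0 : 0 ≤ ∫ ω, (1 - Real.cos (t * (X ω - X' ω))) ∂μ := hnn t _
    have hC0 : 0 ≤ ∫ ω, (1 - Real.cos (t * (Y ω - Y' ω))) ∂μ := hnn t _
    have hae : ∀ (W : Ω → ℝ), (0:Ω → ℝ) ≤ᵐ[μ] fun ω => 1 - Real.cos (t * W ω) :=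
      fun W => ae_of_all _ fun ω => by
        have := Real.cos_le_one (t * W ω); simp; linarith
    rw [← ofReal_integral_eq_lintegral_ofReal (hiW t (fun ω => X ω - X' ω) (hX.sub hX')) (hae _),
      ← ofReal_integral_eq_lintegral_ofReal (hiW t (fun ω => Y ω - Y' ω) (hY.sub hY')) (hae _),
      ← ofReal_integral_eq_lintegral_ofReal (hiW t (fun ω => X ω - Y ω) (hX.sub hY)) (hae _),
      ← ENNReal.ofReal_add hB0 hC0]
    calc ENNReal.ofReal ((∫ ω, (1 - Real.cos (t * (X ω - X' ω))) ∂μ)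
          + ∫ ω, (1 - Real.cos (t * (Y ω - Y' ω))) ∂μ)
        ≤ ENNReal.ofReal (2 * ∫ ω, (1 - Real.cos (t * (X ω - Y ω))) ∂μ) :=
          ENNReal.ofReal_le_ofReal hBC
      _ = 2 * ENNReal.ofReal (∫ ω, (1 - Real.cos (t * (X ω - Y ω))) ∂μ) := by
          rw [ENNReal.ofReal_mul (by norm_num : (0:ℝ) ≤ 2)]
          norm_num
  -- measurability of the inner lintegrals as functions of t
  have mG : ∀ (W : Ω → ℝ), Measurable W →
      Measurable (fun t : ℝ => ∫⁻ ω, ENNReal.ofReal (1 - Real.cos (t * W ω)) ∂μ) := by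
    intro W hW
    apply Measurable.lintegral_prod_right
      (f := fun (t : ℝ) (ω : Ω) => ENNReal.ofReal (1 - Real.cos (t * W ω)))
    exact ENNReal.measurable_ofReal.comp
      ((Real.measurable_cos.comp ((measurable_fst).mul (hW.comp measurable_snd))).const_sub 1)
  have hww : Measurable (fun t : ℝ => ENNReal.ofReal (t ^ (-1 - α))) :=
    ENNReal.measurable_ofReal.comp (by measurability)
  -- weighted integral inequality
  have hII : (∫⁻ t in Ioi (0:ℝ), ENNReal.ofReal (t ^ (-1 - α))
        * ∫⁻ ω, ENNReal.ofReal (1 - Real.cos (t * (X ω - X' ω))) ∂μ)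
      + (∫⁻ t in Ioi (0:ℝ), ENNReal.ofReal (t ^ (-1 - α))
        * ∫⁻ ω, ENNReal.ofReal (1 - Real.cos (t * (Y ω - Y' ω))) ∂μ)
      ≤ 2 * ∫⁻ t in Ioi (0:ℝ), ENNReal.ofReal (t ^ (-1 - α))
        * ∫⁻ ω, ENNReal.ofReal (1 - Real.cos (t * (X ω - Y ω))) ∂μ := by
    rw [← lintegral_add_left (f := fun t => ENNReal.ofReal (t ^ (-1 - α))
        * ∫⁻ ω, ENNReal.ofReal (1 - Real.cos (t * (X ω - X' ω))) ∂μ)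
      (hww.mul (mG (fun ω => X ω - X' ω) (hX.sub hX')))]
    calc ∫⁻ t in Ioi (0:ℝ), (ENNReal.ofReal (t ^ (-1 - α))
            * (∫⁻ ω, ENNReal.ofReal (1 - Real.cos (t * (X ω - X' ω))) ∂μ)
          + ENNReal.ofReal (t ^ (-1 - α))
            * ∫⁻ ω, ENNReal.ofReal (1 - Real.cos (t * (Y ω - Y' ω))) ∂μ)
        ≤ ∫⁻ t in Ioi (0:ℝ), 2 * (ENNReal.ofReal (t ^ (-1 - α))
            * ∫⁻ ω, ENNReal.ofReal (1 - Real.cos (t * (X ω - Y ω))) ∂μ) := by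
          refine lintegral_mono fun t => ?_
          rw [← mul_add]
          calc ENNReal.ofReal (t ^ (-1 - α))
              * ((∫⁻ ω, ENNReal.ofReal (1 - Real.cos (t * (X ω - X' ω))) ∂μ)
                + ∫⁻ ω, ENNReal.ofReal (1 - Real.cos (t * (Y ω - Y' ω))) ∂μ)
              ≤ ENNReal.ofReal (t ^ (-1 - α))
                * (2 * ∫⁻ ω, ENNReal.ofReal (1 - Real.cos (t * (X ω - Y ω))) ∂μ) :=
              mul_le_mul_right (hptE t) _
            _ = 2 * (ENNReal.ofReal (t ^ (-1 - α))
                * ∫⁻ ω, ENNReal.ofReal (1 - Real.cos (t * (X ω - Y ω))) ∂μ) := by ring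
      _ = 2 * ∫⁻ t in Ioi (0:ℝ), ENNReal.ofReal (t ^ (-1 - α))
            * ∫⁻ ω, ENNReal.ofReal (1 - Real.cos (t * (X ω - Y ω))) ∂μ :=
          lintegral_const_mul' 2 _ (by norm_num)
  have T1 := eJ_tonelli hα μ (fun ω => X ω - Y ω) (hX.sub hY)
  have T2 := eJ_tonelli hα μ (fun ω => X ω - X' ω) (hX.sub hX')
  have T3 := eJ_tonelli hα μ (fun ω => Y ω - Y' ω) (hY.sub hY')
  rw [T1, T2, T3] at hII
  have hK0 := eJ_ne_zero hα
  have hKtop := eJ_ne_top hα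
  have hL : (∫⁻ ω, ENNReal.ofReal (|X ω - X' ω| ^ α) ∂μ)
      + (∫⁻ ω, ENNReal.ofReal (|Y ω - Y' ω| ^ α) ∂μ)
      ≤ 2 * ∫⁻ ω, ENNReal.ofReal (|X ω - Y ω| ^ α) ∂μ := by
    refine (ENNReal.mul_le_mul_iff_left hK0 hKtop).mp ?_
    calc ((∫⁻ ω, ENNReal.ofReal (|X ω - X' ω| ^ α) ∂μ)
          + ∫⁻ ω, ENNReal.ofReal (|Y ω - Y' ω| ^ α) ∂μ) * eJ α 1
        = (∫⁻ ω, ENNReal.ofReal (|X ω - X' ω| ^ α) ∂μ) * eJ α 1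
          + (∫⁻ ω, ENNReal.ofReal (|Y ω - Y' ω| ^ α) ∂μ) * eJ α 1 := add_mul _ _ _
      _ ≤ 2 * ((∫⁻ ω, ENNReal.ofReal (|X ω - Y ω| ^ α) ∂μ) * eJ α 1) := hII
      _ = (2 * ∫⁻ ω, ENNReal.ofReal (|X ω - Y ω| ^ α) ∂μ) * eJ α 1 := by ring
  -- convert to Bochner integrals
  have haer : ∀ (U V : Ω → ℝ), (0:Ω → ℝ) ≤ᵐ[μ] fun ω => |U ω - V ω| ^ α :=
    fun U V => ae_of_all _ fun ω => Real.rpow_nonneg (abs_nonneg _) _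
  have e1 : ∫ ω, |X ω - Y ω| ^ α ∂μ
      = (∫⁻ ω, ENNReal.ofReal (|X ω - Y ω| ^ α) ∂μ).toReal :=
    integral_eq_lintegral_of_nonneg_ae (haer X Y) hintXY.aestronglyMeasurable
  have e2 : ∫ ω, |X ω - X' ω| ^ α ∂μ
      = (∫⁻ ω, ENNReal.ofReal (|X ω - X' ω| ^ α) ∂μ).toReal :=
    integral_eq_lintegral_of_nonneg_ae (haer X X') hintXX'.aestronglyMeasurable
  have e3 : ∫ ω, |Y ω - Y' ω| ^ α ∂μ
      = (∫⁻ ω, ENNReal.ofReal (|Y ω - Y' ω| ^ α) ∂μ).toReal :=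
    integral_eq_lintegral_of_nonneg_ae (haer Y Y') hintYY'.aestronglyMeasurable
  have hL1top : (∫⁻ ω, ENNReal.ofReal (|X ω - Y ω| ^ α) ∂μ) ≠ ⊤ := hintXY.lintegral_lt_top.ne
  have hL2top : (∫⁻ ω, ENNReal.ofReal (|X ω - X' ω| ^ α) ∂μ) ≠ ⊤ := hintXX'.lintegral_lt_top.ne
  have hL3top : (∫⁻ ω, ENNReal.ofReal (|Y ω - Y' ω| ^ α) ∂μ) ≠ ⊤ := hintYY'.lintegral_lt_top.ne
  have h2 := ENNReal.toReal_mono (ENNReal.mul_ne_top (by norm_num) hL1top) hL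
  rw [ENNReal.toReal_add hL2top hL3top, ENNReal.toReal_mul, ENNReal.toReal_ofNat] at h2
  rw [e1, e2, e3]
  linarith
end
end
end

section
/- For α ∈ (0,2) and independent random variables X and Y with E|X|^α + E|Y|^α < ∞, ℰ(X,Y;α) = ∫ |φ_X(t) − φ_Y(t)|² ω(t;α) dt where ω(t;α) = (C(α)|t|^{1+α})^{−1} and C(α) = 2π^{1/2} Γ(1−α/2)/(α 2^α Γ((1+α)/2)); that is, the generalized energy distance equals the weighted L² distance between characteristic functions. -/
open MeasureTheory ProbabilityTheory Real
open scoped ENNReal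

noncomputable section

section EnergyAux
open Set

lemma lint_gamma {q b : ℝ} (hq : -1 < q) (hb : 0 < b) :
    ∫⁻ x in Ioi (0:ℝ), ENNReal.ofReal (x ^ q * rexp (-(b * x)))
      = ENNReal.ofReal (b ^ (-(q+1)) * Real.Gamma (q+1)) := by
  have h1 : ∀ x : ℝ, x ^ q * rexp (-b * x ^ (1:ℝ)) = x ^ q * rexp (-(b * x)) := by
    intro x; rw [Real.rpow_one]; ring_nf
  have hint : IntegrableOn (fun x : ℝ => x ^ q * rexp (-(b * x))) (Ioi 0) := by
    have := integrableOn_rpow_mul_exp_neg_mul_rpow hq one_pos hb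
    simpa only [h1] using this
  have hval : ∫ x in Ioi (0:ℝ), x ^ q * rexp (-(b * x))
      = b ^ (-(q+1)) * Real.Gamma (q+1) := by
    have := integral_rpow_mul_exp_neg_mul_rpow one_pos hq hb
    simp only [h1] at this
    rw [this]; norm_num
  rw [← hval, ← ofReal_integral_eq_lintegral_ofReal hint]
  filter_upwards [ae_restrict_mem measurableSet_Ioi] with x hx
  exact mul_nonneg (Real.rpow_nonneg (le_of_lt hx) q) (Real.exp_nonneg _)

-- L3
lemma lint_rpow_Ioo {s a : ℝ} (hs : 0 < s) (ha : 0 < a) :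
    ∫⁻ u in Ioo (0:ℝ) a, ENNReal.ofReal (u ^ (s-1)) = ENNReal.ofReal (a ^ s / s) := by
  have hint : IntegrableOn (fun u : ℝ => u ^ (s-1)) (Ioo 0 a) := by
    have := (intervalIntegral.intervalIntegrable_rpow' (by linarith : (-1:ℝ) < s - 1) (a := 0) (b := a))
    exact ((intervalIntegrable_iff_integrableOn_Ioc_of_le ha.le).mp this).mono_set Ioo_subset_Ioc_self
  have hval : ∫ u in Ioo (0:ℝ) a, u ^ (s-1) = a ^ s / s := by
    rw [← integral_Ioc_eq_integral_Ioo, ← intervalIntegral.integral_of_le ha.le,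
      integral_rpow (Or.inl (by linarith))]
    rw [Real.zero_rpow (by linarith : s - 1 + 1 ≠ 0)]
    norm_num [sub_add_cancel]
  rw [← hval, ← ofReal_integral_eq_lintegral_ofReal hint]
  filter_upwards [ae_restrict_mem measurableSet_Ioo] with u hu
  exact Real.rpow_nonneg hu.1.le _

lemma lint_exp_Ioo {b : ℝ} (hb : 0 < b) :
    ∫⁻ w in Ioo (0:ℝ) b, ENNReal.ofReal (rexp (-w)) = ENNReal.ofReal (1 - rexp (-b)) := by
  have hint : IntegrableOn (fun w : ℝ => rexp (-w)) (Ioo 0 b) :=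
    ((Real.continuous_exp.comp continuous_neg).intervalIntegrable 0 b
      |> (intervalIntegrable_iff_integrableOn_Ioc_of_le hb.le).mp).mono_set Ioo_subset_Ioc_self
  have hval : ∫ w in Ioo (0:ℝ) b, rexp (-w) = 1 - rexp (-b) := by
    rw [← integral_Ioc_eq_integral_Ioo, ← intervalIntegral.integral_of_le hb.le]
    have := intervalIntegral.integral_comp_neg (a := 0) (b := b) (fun w => rexp w)
    rw [this, integral_exp]
    simp
  rw [← hval, ← ofReal_integral_eq_lintegral_ofReal hint]
  filter_upwards with w using Real.exp_nonneg _

lemma lintA {s c : ℝ} (hs0 : 0 < s) (hs1 : s < 1) (hc : 0 < c) :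
    ∫⁻ u in Ioi (0:ℝ), ENNReal.ofReal (u ^ (s-1) * (1 - rexp (-(c/u))))
      = ENNReal.ofReal (c ^ s * Real.Gamma (1-s) / s) := by
  set g : ℝ → ℝ → ℝ≥0∞ := fun u w =>
    if u * w < c then ENNReal.ofReal (u ^ (s-1) * rexp (-w)) else 0 with hg
  have hmeas : Measurable (Function.uncurry g) := by
    apply Measurable.ite
    · exact measurableSet_lt (measurable_fst.mul measurable_snd) measurable_const
    · fun_prop
    · exact measurable_const
  -- inner over w
  have hinner : ∀ u ∈ Ioi (0:ℝ), ∫⁻ w in Ioi (0:ℝ), g u w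
      = ENNReal.ofReal (u ^ (s-1) * (1 - rexp (-(c/u)))) := by
    intro u hu
    have hcu : 0 < c / u := div_pos hc hu
    have hcong : ∀ᵐ w ∂(volume.restrict (Ioi (0:ℝ))),
        g u w = (Ioo (0:ℝ) (c/u)).indicator (fun w => ENNReal.ofReal (u ^ (s-1) * rexp (-w))) w := by
      filter_upwards [ae_restrict_mem measurableSet_Ioi] with w hw
      by_cases h : u * w < c
      · rw [hg]; simp only [if_pos h]
        rw [indicator_of_mem (mem_Ioo.mpr ⟨hw, by rwa [lt_div_iff₀ hu, mul_comm]⟩)]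
      · rw [hg]; simp only [if_neg h]
        rw [indicator_of_notMem (by
          intro hmem
          exact h (by rw [mul_comm]; exact (lt_div_iff₀ hu).mp (mem_Ioo.mp hmem).2))]
    rw [lintegral_congr_ae hcong, lintegral_indicator measurableSet_Ioo,
      Measure.restrict_restrict measurableSet_Ioo,
      inter_eq_self_of_subset_left (fun w hw => hw.1)]
    have : ∀ᵐ w ∂(volume.restrict (Ioo (0:ℝ) (c/u))),
        ENNReal.ofReal (u ^ (s-1) * rexp (-w))
          = ENNReal.ofReal (u ^ (s-1)) * ENNReal.ofReal (rexp (-w)) := by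
      filter_upwards with w
      exact ENNReal.ofReal_mul (Real.rpow_nonneg (le_of_lt hu) _)
    rw [lintegral_congr_ae this, lintegral_const_mul'' _ (by fun_prop), lint_exp_Ioo hcu,
      ← ENNReal.ofReal_mul (Real.rpow_nonneg (le_of_lt hu) _)]
  -- inner over u
  have hinner2 : ∀ w ∈ Ioi (0:ℝ), ∫⁻ u in Ioi (0:ℝ), g u w
      = ENNReal.ofReal (rexp (-w)) * ENNReal.ofReal ((c/w) ^ s / s) := by
    intro w hw
    have hcw : 0 < c / w := div_pos hc hw
    have hcong : ∀ᵐ u ∂(volume.restrict (Ioi (0:ℝ))),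
        g u w = (Ioo (0:ℝ) (c/w)).indicator (fun u => ENNReal.ofReal (u ^ (s-1) * rexp (-w))) u := by
      filter_upwards [ae_restrict_mem measurableSet_Ioi] with u hu
      by_cases h : u * w < c
      · rw [hg]; simp only [if_pos h]
        rw [indicator_of_mem (mem_Ioo.mpr ⟨hu, by rwa [lt_div_iff₀ hw]⟩)]
      · rw [hg]; simp only [if_neg h]
        rw [indicator_of_notMem (by intro hmem; exact h ((lt_div_iff₀ hw).mp (mem_Ioo.mp hmem).2))]
    rw [lintegral_congr_ae hcong, lintegral_indicator measurableSet_Ioo,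
      Measure.restrict_restrict measurableSet_Ioo,
      inter_eq_self_of_subset_left (fun u hu => hu.1)]
    have : ∀ᵐ u ∂(volume.restrict (Ioo (0:ℝ) (c/w))),
        ENNReal.ofReal (u ^ (s-1) * rexp (-w))
          = ENNReal.ofReal (rexp (-w)) * ENNReal.ofReal (u ^ (s-1)) := by
      filter_upwards [ae_restrict_mem measurableSet_Ioo] with u hu
      rw [← ENNReal.ofReal_mul (Real.exp_nonneg _), mul_comm]
    rw [lintegral_congr_ae this, lintegral_const_mul'' _ (by fun_prop),
      lint_rpow_Ioo hs0 hcw]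
  -- swap
  have hswap : ∫⁻ u in Ioi (0:ℝ), ∫⁻ w in Ioi (0:ℝ), g u w
      = ∫⁻ w in Ioi (0:ℝ), ∫⁻ u in Ioi (0:ℝ), g u w :=
    lintegral_lintegral_swap (hmeas.aemeasurable)
  calc ∫⁻ u in Ioi (0:ℝ), ENNReal.ofReal (u ^ (s-1) * (1 - rexp (-(c/u))))
      = ∫⁻ u in Ioi (0:ℝ), ∫⁻ w in Ioi (0:ℝ), g u w := by
        rw [setLIntegral_congr_fun measurableSet_Ioi
          (fun u hu => (hinner u hu).symm)]
    _ = ∫⁻ w in Ioi (0:ℝ), ∫⁻ u in Ioi (0:ℝ), g u w := hswap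
    _ = ∫⁻ w in Ioi (0:ℝ), ENNReal.ofReal (rexp (-w) * ((c/w) ^ s / s)) := by
        refine setLIntegral_congr_fun measurableSet_Ioi
          (fun w hw => ?_)
        rw [hinner2 w hw, ← ENNReal.ofReal_mul (Real.exp_nonneg _)]
    _ = ∫⁻ w in Ioi (0:ℝ), ENNReal.ofReal (c ^ s / s) * ENNReal.ofReal (w ^ (-s) * rexp (-(1*w))) := by
        refine setLIntegral_congr_fun measurableSet_Ioi
          (fun w hw => ?_)
        rw [← ENNReal.ofReal_mul (by positivity)]
        congr 1
        rw [Real.div_rpow hc.le (le_of_lt hw), Real.rpow_neg (le_of_lt hw)]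
        rw [one_mul]
        field_simp
    _ = ENNReal.ofReal (c ^ s * Real.Gamma (1-s) / s) := by
        rw [lintegral_const_mul'' _ (by fun_prop), lint_gamma (by linarith) one_pos,
          ← ENNReal.ofReal_mul (by positivity)]
        congr 1
        rw [Real.one_rpow, one_mul]
        have : -s + 1 = 1 - s := by ring
        rw [this]
        ring

section GaussPart
open Complex
lemma gauss_cos_integrable {u : ℝ} (hu : 0 < u) (x : ℝ) :
    Integrable (fun t : ℝ => Complex.exp (Complex.I * x * t) * Complex.exp (-(u:ℂ) * t^2)) := by
  have h := integrable_cexp_quadratic (b := (u:ℂ)) (by simpa using hu) (Complex.I * x) 0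
  apply h.congr
  filter_upwards with t
  rw [← Complex.exp_add]
  ring_nf

lemma gauss_cos {u : ℝ} (hu : 0 < u) (x : ℝ) :
    ∫ t : ℝ, Real.cos (x * t) * rexp (-(u * t^2)) = Real.sqrt (π/u) * rexp (-(x^2/(4*u))) := by
  have hre : (0:ℝ) < ((u:ℂ)).re := by simpa using hu
  have key := fourierIntegral_gaussian hre (x : ℂ)
  have hint := gauss_cos_integrable hu x
  have hL := congrArg Complex.re key
  rw [show (∫ (t : ℝ), cexp (I * ↑x * ↑t) * cexp (-↑u * ↑t ^ 2)).re
      = RCLike.re (∫ (t : ℝ), cexp (I * ↑x * ↑t) * cexp (-↑u * ↑t ^ 2)) from rfl,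
    ← integral_re hint] at hL
  have h1 : ∀ t : ℝ, RCLike.re (Complex.exp (Complex.I * x * t) * Complex.exp (-(u:ℂ) * t^2))
      = Real.cos (x * t) * rexp (-(u * t^2)) := by
    intro t
    simp only [RCLike.re_to_complex]
    rw [← Complex.exp_add]
    have : Complex.I * x * t + -(u:ℂ) * t^2 = Complex.ofReal (-(u * t^2)) + Complex.ofReal (x*t) * Complex.I := by
      push_cast; ring
    rw [this, Complex.exp_re]
    simp [← Complex.ofReal_pow, mul_comm]
  simp_rw [h1] at hL
  rw [hL]
  have h2 : ((↑π / ↑u : ℂ)) ^ ((1:ℂ) / 2) = Complex.ofReal (Real.sqrt (π / u)) := by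
    rw [show ((↑π / ↑u : ℂ)) = Complex.ofReal (π / u) by push_cast; ring,
      show ((1:ℂ)/2) = Complex.ofReal ((1:ℝ)/2) by push_cast; ring,
      ← Complex.ofReal_cpow (by positivity), Real.sqrt_eq_rpow]
  have h3 : Complex.exp (-(x:ℂ)^2 / (4 * u)) = Complex.ofReal (rexp (-(x^2/(4*u)))) := by
    rw [Complex.ofReal_exp]; congr 1; push_cast; ring
  rw [h2, h3, ← Complex.ofReal_mul, Complex.ofReal_re]
end GaussPart

lemma one_sub_cos_nonneg (y : ℝ) : 0 ≤ 1 - Real.cos y :=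
  sub_nonneg.mpr (Real.cos_le_one y)

lemma gauss_cos_integrable' {u : ℝ} (hu : 0 < u) (x : ℝ) :
    Integrable (fun t : ℝ => Real.cos (x*t) * rexp (-(u*t^2))) := by
  have he : Integrable (fun t : ℝ => rexp (-(u*t^2))) := by
    simpa [neg_mul] using integrable_exp_neg_mul_sq hu
  refine he.mono' (Continuous.aestronglyMeasurable (by continuity)) ?_
  filter_upwards with t
  rw [norm_mul, Real.norm_eq_abs, Real.norm_eq_abs, abs_of_nonneg (Real.exp_nonneg _)]
  exact mul_le_of_le_one_left (Real.exp_nonneg _) (Real.abs_cos_le_one _)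

lemma gauss_one_sub_cos_integrable {u : ℝ} (hu : 0 < u) (x : ℝ) :
    Integrable (fun t : ℝ => (1 - Real.cos (x*t)) * rexp (-(u*t^2))) := by
  have he : Integrable (fun t : ℝ => rexp (-(u*t^2))) := by
    simpa [neg_mul] using integrable_exp_neg_mul_sq hu
  have := he.sub (gauss_cos_integrable' hu x)
  apply this.congr
  filter_upwards with t
  simp only [Pi.sub_apply]
  ring

lemma lint_gauss_one_sub_cos {u : ℝ} (hu : 0 < u) (x : ℝ) :
    ∫⁻ t : ℝ, ENNReal.ofReal ((1 - Real.cos (x*t)) * rexp (-(u*t^2)))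
      = ENNReal.ofReal (Real.sqrt (π/u) * (1 - rexp (-(x^2/(4*u))))) := by
  have hint := gauss_one_sub_cos_integrable hu x
  have hval : ∫ t : ℝ, (1 - Real.cos (x*t)) * rexp (-(u*t^2))
      = Real.sqrt (π/u) * (1 - rexp (-(x^2/(4*u)))) := by
    have he : Integrable (fun t : ℝ => rexp (-(u*t^2))) := by
      simpa [neg_mul] using integrable_exp_neg_mul_sq hu
    have hsplit : ∀ t : ℝ, (1 - Real.cos (x*t)) * rexp (-(u*t^2))
        = rexp (-(u*t^2)) - Real.cos (x*t) * rexp (-(u*t^2)) := fun t => by ring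
    simp_rw [hsplit]
    rw [integral_sub he (gauss_cos_integrable' hu x), gauss_cos hu x]
    have hg : ∫ t : ℝ, rexp (-(u*t^2)) = Real.sqrt (π/u) := by
      simpa [neg_mul] using integral_gaussian u
    rw [hg]; ring
  rw [← hval, ← ofReal_integral_eq_lintegral_ofReal hint]
  filter_upwards with t
  exact mul_nonneg (one_sub_cos_nonneg _) (Real.exp_nonneg _)

lemma key_lint {α : ℝ} (hα : α ∈ Set.Ioo (0:ℝ) 2) (x : ℝ) :
    ∫⁻ t : ℝ, ENNReal.ofReal ((1 - Real.cos (t * x)) *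
        ((2 * Real.sqrt π * Real.Gamma (1 - α / 2)
          / (α * 2 ^ α * Real.Gamma ((1 + α) / 2))) * |t| ^ (1 + α))⁻¹)
      = ENNReal.ofReal (|x| ^ α) := by
  obtain ⟨hα0, hα2⟩ := hα
  set C : ℝ := 2 * Real.sqrt π * Real.Gamma (1 - α / 2)
      / (α * 2 ^ α * Real.Gamma ((1 + α) / 2)) with hCdef
  have hG1 : 0 < Real.Gamma (1 - α / 2) := Real.Gamma_pos_of_pos (by linarith)
  have hA : 0 < Real.Gamma ((1 + α) / 2) := Real.Gamma_pos_of_pos (by linarith)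
  have hsqrtpi : 0 < Real.sqrt π := Real.sqrt_pos.mpr Real.pi_pos
  have h2α : (0:ℝ) < 2 ^ α := Real.rpow_pos_of_pos two_pos α
  have hC : 0 < C := by rw [hCdef]; positivity
  set A : ℝ := Real.Gamma ((1 + α) / 2) with hAdef
  set q : ℝ := (α - 1) / 2 with hqdef
  have hq : (-1:ℝ) < q := by rw [hqdef]; linarith
  by_cases hx : x = 0
  · subst hx
    simp [Real.zero_rpow hα0.ne']
  have hx2 : 0 < x^2 / 4 := by positivity
  set s : ℝ := α / 2 with hsdef
  have hs0 : 0 < s := by rw [hsdef]; linarith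
  have hs1 : s < 1 := by rw [hsdef]; linarith
  set F : ℝ → ℝ → ℝ≥0∞ := fun t u =>
    ENNReal.ofReal ((1 - Real.cos (t * x)) * (u ^ q * rexp (-(t^2 * u)))) with hFdef
  have hFmeas : Measurable (Function.uncurry F) := by
    rw [hFdef]; fun_prop
  have h0 : ∀ᵐ t : ℝ, t ≠ (0:ℝ) := by
    refine ae_iff.mpr ?_
    have : {t : ℝ | ¬ t ≠ 0} = {0} := by ext t; simp
    rw [this]; exact measure_singleton 0
  have habs : ∀ t : ℝ, t ≠ 0 → ((t:ℝ)^2) ^ (-(q+1)) = |t| ^ (-(1+α)) := by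
    intro t ht
    rw [← sq_abs, ← Real.rpow_natCast |t| 2, ← Real.rpow_mul (abs_nonneg t)]
    congr 1
    rw [hqdef]; push_cast; ring
  have hstep1 : ∀ᵐ t : ℝ, ENNReal.ofReal ((1 - Real.cos (t * x)) * (C * |t| ^ (1 + α))⁻¹)
      = ENNReal.ofReal ((C*A)⁻¹) * ∫⁻ u in Ioi (0:ℝ), F t u := by
    filter_upwards [h0] with t ht
    have ht2 : 0 < t^2 := by positivity
    have hpull : ∫⁻ u in Ioi (0:ℝ), F t u
        = ENNReal.ofReal (1 - Real.cos (t * x)) *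
          ∫⁻ u in Ioi (0:ℝ), ENNReal.ofReal (u ^ q * rexp (-(t^2 * u))) := by
      rw [← lintegral_const_mul'' _ (by fun_prop)]
      refine lintegral_congr_ae ?_
      filter_upwards with u
      simp only [hFdef]
      rw [← ENNReal.ofReal_mul (one_sub_cos_nonneg _)]
    rw [hpull, lint_gamma hq ht2, habs t ht]
    rw [← ENNReal.ofReal_mul (one_sub_cos_nonneg _),
      ← ENNReal.ofReal_mul (by positivity)]
    congr 1
    have htabs : 0 < |t| := abs_pos.mpr ht
    have h5 : 0 < |t| ^ (1+α) := Real.rpow_pos_of_pos htabs _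
    rw [Real.rpow_neg (abs_nonneg t), show q + 1 = (1+α)/2 by rw [hqdef]; ring, ← hAdef, eq_comm]
    calc (C*A)⁻¹ * ((1 - Real.cos (t*x)) * ((|t| ^ (1+α))⁻¹ * A))
        = (A⁻¹ * A) * ((1 - Real.cos (t*x)) * (C⁻¹ * (|t| ^ (1+α))⁻¹)) := by
          rw [mul_inv]; ring
      _ = (1 - Real.cos (t*x)) * (C * |t| ^ (1+α))⁻¹ := by
          rw [inv_mul_cancel₀ hA.ne', one_mul, ← mul_inv]
  calc ∫⁻ t : ℝ, ENNReal.ofReal ((1 - Real.cos (t * x)) * (C * |t| ^ (1 + α))⁻¹)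
      = ∫⁻ t : ℝ, ENNReal.ofReal ((C*A)⁻¹) * ∫⁻ u in Ioi (0:ℝ), F t u :=
        lintegral_congr_ae hstep1
    _ = ENNReal.ofReal ((C*A)⁻¹) * ∫⁻ t : ℝ, ∫⁻ u in Ioi (0:ℝ), F t u := by
        rw [lintegral_const_mul'' _ ?_]
        exact (hFmeas.lintegral_prod_right').aemeasurable
    _ = ENNReal.ofReal ((C*A)⁻¹) * ∫⁻ u in Ioi (0:ℝ), ∫⁻ t : ℝ, F t u := by
        rw [lintegral_lintegral_swap hFmeas.aemeasurable]
    _ = ENNReal.ofReal ((C*A)⁻¹) * ∫⁻ u in Ioi (0:ℝ),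
          ENNReal.ofReal (Real.sqrt π * (u ^ (s-1) * (1 - rexp (-((x^2/4)/u))))) := by
        congr 1
        refine setLIntegral_congr_fun measurableSet_Ioi
          (fun u hu => ?_)
        have hu' : (0:ℝ) < u := hu
        have hinner : ∫⁻ t : ℝ, F t u
            = ENNReal.ofReal (u ^ q) *
              ∫⁻ t : ℝ, ENNReal.ofReal ((1 - Real.cos (x * t)) * rexp (-(u * t^2))) := by
          rw [← lintegral_const_mul'' _ (by fun_prop)]
          refine lintegral_congr (fun t => ?_)
          simp only [hFdef]
          rw [← ENNReal.ofReal_mul (Real.rpow_nonneg hu'.le _), mul_comm t x,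
            mul_comm (t^2) u]
          congr 1
          ring
        rw [hinner, lint_gauss_one_sub_cos hu' x,
          ← ENNReal.ofReal_mul (Real.rpow_nonneg hu'.le _)]
        congr 1
        have hsqrt : Real.sqrt (π/u) = Real.sqrt π * u ^ (-(1/2) : ℝ) := by
          rw [show π/u = π * u⁻¹ by ring, Real.sqrt_mul Real.pi_pos.le,
            Real.sqrt_inv, Real.rpow_neg hu'.le]
          simp only [Real.sqrt_eq_rpow]
        rw [hsqrt, show x^2/(4*u) = (x^2/4)/u by ring]
        have hrw : u ^ q * u ^ (-(1/2) : ℝ) = u ^ (s - 1) := by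
          rw [← Real.rpow_add hu']
          congr 1
          rw [hqdef, hsdef]; ring
        calc u ^ q * (Real.sqrt π * u ^ (-(1/2) : ℝ) * (1 - rexp (-(x^2/4/u))))
            = Real.sqrt π * ((u ^ q * u ^ (-(1/2) : ℝ)) * (1 - rexp (-(x^2/4/u)))) := by ring
          _ = Real.sqrt π * (u ^ (s-1) * (1 - rexp (-(x^2/4/u)))) := by rw [hrw]
    _ = ENNReal.ofReal (|x| ^ α) := by
        have hpull2 : ∫⁻ u in Ioi (0:ℝ),
            ENNReal.ofReal (Real.sqrt π * (u ^ (s-1) * (1 - rexp (-((x^2/4)/u)))))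
            = ENNReal.ofReal (Real.sqrt π) *
              ∫⁻ u in Ioi (0:ℝ), ENNReal.ofReal (u ^ (s-1) * (1 - rexp (-((x^2/4)/u)))) := by
          rw [← lintegral_const_mul'' _ (by fun_prop)]
          refine lintegral_congr (fun u => ?_)
          rw [← ENNReal.ofReal_mul (Real.sqrt_nonneg _)]
        rw [hpull2, lintA hs0 hs1 hx2, ← mul_assoc,
          ← ENNReal.ofReal_mul (by positivity), ← ENNReal.ofReal_mul (by positivity)]
        congr 1
        have hxs : (x^2/4 : ℝ) ^ s = |x| ^ α / 2 ^ α := by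
          have h4 : x^2/4 = (|x|/2)^2 := by rw [div_pow, sq_abs]; norm_num
          rw [h4, ← Real.rpow_natCast (|x|/2) 2, ← Real.rpow_mul (by positivity),
            show ((2:ℕ):ℝ) * s = α by push_cast; rw [hsdef]; ring,
            Real.div_rpow (abs_nonneg x) (by norm_num)]
        rw [hxs, hCdef, hsdef]
        have hGs : Real.Gamma (1-s) = Real.Gamma (1 - α/2) := by rw [hsdef]
        rw [hGs]
        have hG1' : Real.Gamma (1 + α*(-1/2)) ≠ 0 := by
          rw [show (1 + α*(-1/2)) = 1 - α/2 by ring]; exact hG1.ne'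
        field_simp

variable {Ω : Type*} [MeasurableSpace Ω] {μ : Measure Ω} [IsProbabilityMeasure μ]




variable {Ω : Type*} [MeasurableSpace Ω] {μ : Measure Ω} [IsProbabilityMeasure μ]

lemma prob_key {α : ℝ} (hα : α ∈ Set.Ioo (0:ℝ) 2) {Z : Ω → ℝ} (hZ : Measurable Z)
    (hmom : Integrable (fun ω => |Z ω| ^ α) μ) :
    Integrable (fun t : ℝ => (1 - ∫ ω, Real.cos (t * Z ω) ∂μ) *
        ((2 * Real.sqrt π * Real.Gamma (1 - α / 2)
          / (α * 2 ^ α * Real.Gamma ((1 + α) / 2))) * |t| ^ (1 + α))⁻¹) volume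
    ∧ (∫ t : ℝ, (1 - ∫ ω, Real.cos (t * Z ω) ∂μ) *
        ((2 * Real.sqrt π * Real.Gamma (1 - α / 2)
          / (α * 2 ^ α * Real.Gamma ((1 + α) / 2))) * |t| ^ (1 + α))⁻¹)
      = ∫ ω, |Z ω| ^ α ∂μ := by
  obtain ⟨hα0, hα2⟩ := hα
  set C : ℝ := 2 * Real.sqrt π * Real.Gamma (1 - α / 2)
      / (α * 2 ^ α * Real.Gamma ((1 + α) / 2)) with hCdef
  have hG1 : 0 < Real.Gamma (1 - α / 2) := Real.Gamma_pos_of_pos (by linarith)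
  have hA : 0 < Real.Gamma ((1 + α) / 2) := Real.Gamma_pos_of_pos (by linarith)
  have hsqrtpi : 0 < Real.sqrt π := Real.sqrt_pos.mpr Real.pi_pos
  have h2α : (0:ℝ) < 2 ^ α := Real.rpow_pos_of_pos two_pos α
  have hC : 0 < C := by rw [hCdef]; positivity
  have hw_nonneg : ∀ t : ℝ, 0 ≤ (C * |t| ^ (1 + α))⁻¹ := by
    intro t; positivity
  set G : ℝ → ℝ := fun t => (1 - ∫ ω, Real.cos (t * Z ω) ∂μ) * (C * |t| ^ (1 + α))⁻¹
    with hGdef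
  have hcos_int : ∀ t : ℝ, Integrable (fun ω => Real.cos (t * Z ω)) μ := by
    intro t
    refine (integrable_const (1:ℝ)).mono'
      ((Real.measurable_cos.comp (measurable_const.mul hZ)).aestronglyMeasurable) ?_
    filter_upwards with ω
    rw [Real.norm_eq_abs]
    exact (Real.abs_cos_le_one _).trans (by norm_num)
  have hone_sub_nonneg : ∀ t : ℝ, 0 ≤ 1 - ∫ ω, Real.cos (t * Z ω) ∂μ := by
    intro t
    have : ∫ ω, Real.cos (t * Z ω) ∂μ ≤ ∫ _ω, (1:ℝ) ∂μ := by
      refine integral_mono (hcos_int t) (integrable_const 1) (fun ω => Real.cos_le_one _)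
    simp only [integral_const, measure_univ, ENNReal.toReal_one, probReal_univ, smul_eq_mul, one_mul] at this
    linarith
  have hG_nonneg : ∀ t : ℝ, 0 ≤ G t := fun t =>
    mul_nonneg (hone_sub_nonneg t) (hw_nonneg t)
  -- strong measurability of G
  have hsm : StronglyMeasurable (fun t : ℝ => ∫ ω, Real.cos (t * Z ω) ∂μ) := by
    apply MeasureTheory.StronglyMeasurable.integral_prod_right'
      (f := fun p : ℝ × Ω => Real.cos (p.1 * Z p.2))
    exact (Real.measurable_cos.comp (measurable_fst.mul (hZ.comp measurable_snd))).stronglyMeasurable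
  have hGsm : AEStronglyMeasurable G volume := by
    apply StronglyMeasurable.aestronglyMeasurable
    apply StronglyMeasurable.mul
    · exact (stronglyMeasurable_const.sub hsm)
    · apply Measurable.stronglyMeasurable
      fun_prop
  -- the double function
  set F : ℝ → Ω → ℝ≥0∞ := fun t ω =>
    ENNReal.ofReal ((1 - Real.cos (t * Z ω)) * (C * |t| ^ (1 + α))⁻¹) with hFdef
  have hFmeas : Measurable (Function.uncurry F) := by
    rw [hFdef]
    apply Measurable.ennreal_ofReal
    apply Measurable.mul
    · apply Measurable.const_sub
      exact Real.measurable_cos.comp (measurable_fst.mul (hZ.comp measurable_snd))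
    · fun_prop
  -- pointwise in t
  have hptw : ∀ t : ℝ, ∫⁻ ω, F t ω ∂μ = ENNReal.ofReal (G t) := by
    intro t
    have hint : Integrable (fun ω => (1 - Real.cos (t * Z ω)) * (C * |t| ^ (1 + α))⁻¹) μ :=
      ((integrable_const (1:ℝ)).sub (hcos_int t)).mul_const _
    rw [← ofReal_integral_eq_lintegral_ofReal hint]
    · congr 1
      rw [integral_mul_const, integral_sub (integrable_const 1) (hcos_int t)]
      simp [hGdef]
    · filter_upwards with ω
      exact mul_nonneg (one_sub_cos_nonneg _) (hw_nonneg t)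
  -- chain
  have hchain : ∫⁻ t : ℝ, ENNReal.ofReal (G t) = ENNReal.ofReal (∫ ω, |Z ω| ^ α ∂μ) := by
    calc ∫⁻ t : ℝ, ENNReal.ofReal (G t)
        = ∫⁻ t : ℝ, ∫⁻ ω, F t ω ∂μ := by
          refine lintegral_congr (fun t => (hptw t).symm)
      _ = ∫⁻ ω, ∫⁻ t : ℝ, F t ω ∂(volume) ∂μ := lintegral_lintegral_swap hFmeas.aemeasurable
      _ = ∫⁻ ω, ENNReal.ofReal (|Z ω| ^ α) ∂μ := by
          refine lintegral_congr (fun ω => ?_)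
          exact key_lint ⟨hα0, hα2⟩ (Z ω)
      _ = ENNReal.ofReal (∫ ω, |Z ω| ^ α ∂μ) := by
          rw [← ofReal_integral_eq_lintegral_ofReal hmom]
          filter_upwards with ω
          positivity
  have hGint : Integrable G volume := by
    refine ⟨hGsm, ?_⟩
    rw [hasFiniteIntegral_iff_ofReal (Filter.Eventually.of_forall hG_nonneg), hchain]
    exact ENNReal.ofReal_lt_top
  refine ⟨hGint, ?_⟩
  rw [integral_eq_lintegral_of_nonneg_ae (Filter.Eventually.of_forall hG_nonneg)
    hGsm, hchain, ENNReal.toReal_ofReal]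
  exact integral_nonneg (fun ω => by positivity)

variable {Ω : Type*} [MeasurableSpace Ω] {μ : Measure Ω} [IsProbabilityMeasure μ]

lemma bdd_cos_int {U : Ω → ℝ} (hU : Measurable U) (t : ℝ) :
    Integrable (fun ω => Real.cos (t * U ω)) μ := by
  refine (integrable_const (1:ℝ)).mono'
    ((Real.measurable_cos.comp (measurable_const.mul hU)).aestronglyMeasurable) ?_
  filter_upwards with ω
  rw [Real.norm_eq_abs]
  exact (Real.abs_cos_le_one _).trans (by norm_num)

lemma bdd_sin_int {U : Ω → ℝ} (hU : Measurable U) (t : ℝ) :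
    Integrable (fun ω => Real.sin (t * U ω)) μ := by
  refine (integrable_const (1:ℝ)).mono'
    ((Real.measurable_sin.comp (measurable_const.mul hU)).aestronglyMeasurable) ?_
  filter_upwards with ω
  rw [Real.norm_eq_abs]
  exact (Real.abs_sin_le_one _).trans (by norm_num)

lemma bdd_mul_int {f g : Ω → ℝ} (hf : Measurable f) (hg : Measurable g)
    (hf1 : ∀ ω, |f ω| ≤ 1) (hg1 : ∀ ω, |g ω| ≤ 1) :
    Integrable (fun ω => f ω * g ω) μ := by
  refine (integrable_const (1:ℝ)).mono' ((hf.mul hg).aestronglyMeasurable) ?_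
  filter_upwards with ω
  rw [Real.norm_eq_abs, abs_mul]
  calc |f ω| * |g ω| ≤ 1 * 1 := mul_le_mul (hf1 ω) (hg1 ω) (abs_nonneg _) (by norm_num)
    _ = 1 := by norm_num

lemma pair_cos {U V : Ω → ℝ} (hU : Measurable U) (hV : Measurable V)
    (hUV : IndepFun U V μ) (t : ℝ) :
    ∫ ω, Real.cos (t * (U ω - V ω)) ∂μ
      = (∫ ω, Real.cos (t * U ω) ∂μ) * (∫ ω, Real.cos (t * V ω) ∂μ)
        + (∫ ω, Real.sin (t * U ω) ∂μ) * (∫ ω, Real.sin (t * V ω) ∂μ) := by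
  have mcos : Measurable (fun x : ℝ => Real.cos (t*x)) :=
    Real.measurable_cos.comp (measurable_const.mul measurable_id)
  have msin : Measurable (fun x : ℝ => Real.sin (t*x)) :=
    Real.measurable_sin.comp (measurable_const.mul measurable_id)
  have hcc : IndepFun (fun ω => Real.cos (t * U ω)) (fun ω => Real.cos (t * V ω)) μ :=
    hUV.comp mcos mcos
  have hss : IndepFun (fun ω => Real.sin (t * U ω)) (fun ω => Real.sin (t * V ω)) μ :=
    hUV.comp msin msin
  have h1 : ∀ ω, Real.cos (t * (U ω - V ω))
      = Real.cos (t * U ω) * Real.cos (t * V ω) + Real.sin (t * U ω) * Real.sin (t * V ω) := by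
    intro ω
    rw [mul_sub, Real.cos_sub]
  simp_rw [h1]
  rw [integral_add
    (bdd_mul_int (f := fun ω => Real.cos (t * U ω)) (g := fun ω => Real.cos (t * V ω))
      (show Measurable fun ω => Real.cos (t * U ω) from mcos.comp hU)
      (show Measurable fun ω => Real.cos (t * V ω) from mcos.comp hV)
      (fun ω => Real.abs_cos_le_one _) (fun ω => Real.abs_cos_le_one _))
    (bdd_mul_int (f := fun ω => Real.sin (t * U ω)) (g := fun ω => Real.sin (t * V ω))
      (show Measurable fun ω => Real.sin (t * U ω) from msin.comp hU)
      (show Measurable fun ω => Real.sin (t * V ω) from msin.comp hV)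
      (fun ω => Real.abs_sin_le_one _) (fun ω => Real.abs_sin_le_one _))]
  congr 1
  · exact hcc.integral_fun_mul_eq_mul_integral (bdd_cos_int hU t).aestronglyMeasurable (bdd_cos_int hV t).aestronglyMeasurable
  · exact hss.integral_fun_mul_eq_mul_integral (bdd_sin_int hU t).aestronglyMeasurable (bdd_sin_int hV t).aestronglyMeasurable

lemma diff_mom {α : ℝ} (hα0 : 0 < α) {U V : Ω → ℝ} (hU : Measurable U) (hV : Measurable V)
    (hUm : Integrable (fun ω => |U ω| ^ α) μ) (hVm : Integrable (fun ω => |V ω| ^ α) μ) :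
    Integrable (fun ω => |U ω - V ω| ^ α) μ := by
  have hbound : ∀ ω, |U ω - V ω| ^ α ≤ 2 ^ α * (|U ω| ^ α + |V ω| ^ α) := by
    intro ω
    have h1 : |U ω - V ω| ≤ |U ω| + |V ω| := abs_sub _ _
    have h2 : |U ω - V ω| ^ α ≤ (|U ω| + |V ω|) ^ α :=
      Real.rpow_le_rpow (abs_nonneg _) h1 hα0.le
    refine h2.trans ?_
    have h3 : |U ω| + |V ω| ≤ 2 * max (|U ω|) (|V ω|) := by
      rcases le_total (|U ω|) (|V ω|) with h | h
      · rw [max_eq_right h]; linarith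
      · rw [max_eq_left h]; linarith
    have h4 : (|U ω| + |V ω|) ^ α ≤ (2 * max (|U ω|) (|V ω|)) ^ α :=
      Real.rpow_le_rpow (by positivity) h3 hα0.le
    refine h4.trans ?_
    rw [Real.mul_rpow (by norm_num) (le_max_of_le_left (abs_nonneg _))]
    gcongr 2 ^ α * ?_
    rcases le_total (|U ω|) (|V ω|) with h | h
    · rw [max_eq_right h]
      exact le_add_of_nonneg_left (by positivity)
    · rw [max_eq_left h]
      exact le_add_of_nonneg_right (by positivity)
  refine ((hUm.add hVm).const_mul (2 ^ α)).mono' ?_ ?_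
  · exact Measurable.aestronglyMeasurable (by fun_prop)
  · filter_upwards with ω
    rw [Real.norm_eq_abs, abs_of_nonneg (by positivity)]
    exact hbound ω

end EnergyAux








theorem generalized_energy_distance_eq_weighted_L2
    {Ω : Type*} [MeasurableSpace Ω] {μ : Measure Ω} [IsProbabilityMeasure μ]
    (α : ℝ) (hα : α ∈ Set.Ioo (0 : ℝ) 2)
    (X X' Y Y' : Ω → ℝ)
    (hX : Measurable X) (hX' : Measurable X') (hY : Measurable Y) (hY' : Measurable Y')
    (hindep : iIndepFun ![X, X', Y, Y'] μ)
    (hXX' : μ.map X = μ.map X') (hYY' : μ.map Y = μ.map Y')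
    (hXmom : Integrable (fun ω => |X ω| ^ α) μ) (hYmom : Integrable (fun ω => |Y ω| ^ α) μ)
    (φX φY : ℝ → ℂ)
    (hφX : ∀ t, φX t = ∫ ω, Complex.exp (Complex.I * (t * X ω)) ∂μ)
    (hφY : ∀ t, φY t = ∫ ω, Complex.exp (Complex.I * (t * Y ω)) ∂μ)
    (C : ℝ) (hC : C = 2 * Real.sqrt π * Real.Gamma (1 - α / 2)
      / (α * 2 ^ α * Real.Gamma ((1 + α) / 2))) :
    2 * (∫ ω, |X ω - Y ω| ^ α ∂μ) - (∫ ω, |X ω - X' ω| ^ α ∂μ)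
        - (∫ ω, |Y ω - Y' ω| ^ α ∂μ)
      = ∫ t : ℝ, ‖φX t - φY t‖ ^ 2 * (C * |t| ^ (1 + α))⁻¹ := by
  subst hC
  obtain ⟨hα0, hα2⟩ := hα
  -- independence of pairs
  have hXY : IndepFun X Y μ := by
    have := hindep.indepFun (show (0:Fin 4) ≠ 2 by decide)
    simpa using this
  have hXX'i : IndepFun X X' μ := by
    have := hindep.indepFun (show (0:Fin 4) ≠ 1 by decide)
    simpa using this
  have hYY'i : IndepFun Y Y' μ := by
    have := hindep.indepFun (show (2:Fin 4) ≠ 3 by decide)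
    simpa using this
  -- moment transfer along equal distributions
  have habs_meas : Measurable (fun x : ℝ => |x| ^ α) := by fun_prop
  have hX'mom : Integrable (fun ω => |X' ω| ^ α) μ := by
    have h1 : Integrable (fun x : ℝ => |x| ^ α) (μ.map X) :=
      (integrable_map_measure habs_meas.aestronglyMeasurable hX.aemeasurable).mpr hXmom
    rw [hXX'] at h1
    exact (integrable_map_measure habs_meas.aestronglyMeasurable hX'.aemeasurable).mp h1
  have hY'mom : Integrable (fun ω => |Y' ω| ^ α) μ := by
    have h1 : Integrable (fun x : ℝ => |x| ^ α) (μ.map Y) :=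
      (integrable_map_measure habs_meas.aestronglyMeasurable hY.aemeasurable).mpr hYmom
    rw [hYY'] at h1
    exact (integrable_map_measure habs_meas.aestronglyMeasurable hY'.aemeasurable).mp h1
  have hm1 : Integrable (fun ω => |X ω - Y ω| ^ α) μ := diff_mom hα0 hX hY hXmom hYmom
  have hm2 : Integrable (fun ω => |X ω - X' ω| ^ α) μ := diff_mom hα0 hX hX' hXmom hX'mom
  have hm3 : Integrable (fun ω => |Y ω - Y' ω| ^ α) μ := diff_mom hα0 hY hY' hYmom hY'mom
  obtain ⟨hg1int, hg1⟩ := prob_key (μ := μ) (Z := fun ω => X ω - Y ω) ⟨hα0, hα2⟩ (hX.sub hY) hm1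
  obtain ⟨hg2int, hg2⟩ := prob_key (μ := μ) (Z := fun ω => X ω - X' ω) ⟨hα0, hα2⟩ (hX.sub hX') hm2
  obtain ⟨hg3int, hg3⟩ := prob_key (μ := μ) (Z := fun ω => Y ω - Y' ω) ⟨hα0, hα2⟩ (hY.sub hY') hm3
  rw [← hg1, ← hg2, ← hg3]
  have hsplit : (∫ t : ℝ,
        (2 * ((1 - ∫ ω, Real.cos (t * (X ω - Y ω)) ∂μ) *
          ((2 * Real.sqrt π * Real.Gamma (1 - α / 2)
            / (α * 2 ^ α * Real.Gamma ((1 + α) / 2))) * |t| ^ (1 + α))⁻¹)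
        - (1 - ∫ ω, Real.cos (t * (X ω - X' ω)) ∂μ) *
          ((2 * Real.sqrt π * Real.Gamma (1 - α / 2)
            / (α * 2 ^ α * Real.Gamma ((1 + α) / 2))) * |t| ^ (1 + α))⁻¹
        - (1 - ∫ ω, Real.cos (t * (Y ω - Y' ω)) ∂μ) *
          ((2 * Real.sqrt π * Real.Gamma (1 - α / 2)
            / (α * 2 ^ α * Real.Gamma ((1 + α) / 2))) * |t| ^ (1 + α))⁻¹))
      = (2 * ∫ t : ℝ, (1 - ∫ ω, Real.cos (t * (X ω - Y ω)) ∂μ) *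
          ((2 * Real.sqrt π * Real.Gamma (1 - α / 2)
            / (α * 2 ^ α * Real.Gamma ((1 + α) / 2))) * |t| ^ (1 + α))⁻¹)
        - (∫ t : ℝ, (1 - ∫ ω, Real.cos (t * (X ω - X' ω)) ∂μ) *
          ((2 * Real.sqrt π * Real.Gamma (1 - α / 2)
            / (α * 2 ^ α * Real.Gamma ((1 + α) / 2))) * |t| ^ (1 + α))⁻¹)
        - (∫ t : ℝ, (1 - ∫ ω, Real.cos (t * (Y ω - Y' ω)) ∂μ) *
          ((2 * Real.sqrt π * Real.Gamma (1 - α / 2)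
            / (α * 2 ^ α * Real.Gamma ((1 + α) / 2))) * |t| ^ (1 + α))⁻¹) := by
    rw [integral_sub (f := fun t : ℝ =>
        2 * ((1 - ∫ ω, Real.cos (t * (X ω - Y ω)) ∂μ) *
          ((2 * Real.sqrt π * Real.Gamma (1 - α / 2)
            / (α * 2 ^ α * Real.Gamma ((1 + α) / 2))) * |t| ^ (1 + α))⁻¹)
        - (1 - ∫ ω, Real.cos (t * (X ω - X' ω)) ∂μ) *
          ((2 * Real.sqrt π * Real.Gamma (1 - α / 2)
            / (α * 2 ^ α * Real.Gamma ((1 + α) / 2))) * |t| ^ (1 + α))⁻¹)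
      ((hg1int.const_mul 2).sub hg2int) hg3int,
      integral_sub (f := fun t : ℝ =>
        2 * ((1 - ∫ ω, Real.cos (t * (X ω - Y ω)) ∂μ) *
          ((2 * Real.sqrt π * Real.Gamma (1 - α / 2)
            / (α * 2 ^ α * Real.Gamma ((1 + α) / 2))) * |t| ^ (1 + α))⁻¹))
      (hg1int.const_mul 2) hg2int, integral_const_mul]
  rw [← hsplit]
  -- distribution transfers for cos/sin
  have mcos : ∀ t : ℝ, Measurable (fun x : ℝ => Real.cos (t*x)) := fun t =>
    Real.measurable_cos.comp (measurable_const.mul measurable_id)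
  have msin : ∀ t : ℝ, Measurable (fun x : ℝ => Real.sin (t*x)) := fun t =>
    Real.measurable_sin.comp (measurable_const.mul measurable_id)
  have hcosX' : ∀ t : ℝ, ∫ ω, Real.cos (t * X' ω) ∂μ = ∫ ω, Real.cos (t * X ω) ∂μ := by
    intro t
    rw [← integral_map hX'.aemeasurable ((mcos t).aestronglyMeasurable), ← hXX',
      integral_map hX.aemeasurable ((mcos t).aestronglyMeasurable)]
  have hsinX' : ∀ t : ℝ, ∫ ω, Real.sin (t * X' ω) ∂μ = ∫ ω, Real.sin (t * X ω) ∂μ := by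
    intro t
    rw [← integral_map hX'.aemeasurable ((msin t).aestronglyMeasurable), ← hXX',
      integral_map hX.aemeasurable ((msin t).aestronglyMeasurable)]
  have hcosY' : ∀ t : ℝ, ∫ ω, Real.cos (t * Y' ω) ∂μ = ∫ ω, Real.cos (t * Y ω) ∂μ := by
    intro t
    rw [← integral_map hY'.aemeasurable ((mcos t).aestronglyMeasurable), ← hYY',
      integral_map hY.aemeasurable ((mcos t).aestronglyMeasurable)]
  have hsinY' : ∀ t : ℝ, ∫ ω, Real.sin (t * Y' ω) ∂μ = ∫ ω, Real.sin (t * Y ω) ∂μ := by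
    intro t
    rw [← integral_map hY'.aemeasurable ((msin t).aestronglyMeasurable), ← hYY',
      integral_map hY.aemeasurable ((msin t).aestronglyMeasurable)]
  -- characteristic function real/imag parts
  have hexp_int : ∀ (t : ℝ) (U : Ω → ℝ), Measurable U →
      Integrable (fun ω => Complex.exp (Complex.I * (t * U ω))) μ := by
    intro t U hU
    refine (integrable_const (1:ℝ)).mono' ?_ ?_
    · exact (Complex.measurable_exp.comp
        (measurable_const.mul (measurable_const.mul (Complex.measurable_ofReal.comp hU)))).aestronglyMeasurable
    · filter_upwards with ω
      rw [Complex.norm_exp]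
      simp
  have hre : ∀ (t : ℝ) (U : Ω → ℝ) (hU : Measurable U),
      (∫ ω, Complex.exp (Complex.I * (t * U ω)) ∂μ).re = ∫ ω, Real.cos (t * U ω) ∂μ := by
    intro t U hU
    rw [show (∫ ω, Complex.exp (Complex.I * (t * U ω)) ∂μ).re
        = RCLike.re (∫ ω, Complex.exp (Complex.I * (t * U ω)) ∂μ) from rfl,
      ← integral_re (hexp_int t U hU)]
    congr 1
    ext ω
    simp only [RCLike.re_to_complex]
    rw [← Complex.ofReal_mul, mul_comm Complex.I, Complex.exp_mul_I]
    simp only [Complex.add_re, Complex.mul_re, Complex.I_re, Complex.I_im,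
      Complex.cos_ofReal_re, Complex.sin_ofReal_im, mul_zero, mul_one, zero_mul,
      sub_zero, add_zero, zero_sub, neg_zero]
  have him : ∀ (t : ℝ) (U : Ω → ℝ) (hU : Measurable U),
      (∫ ω, Complex.exp (Complex.I * (t * U ω)) ∂μ).im = ∫ ω, Real.sin (t * U ω) ∂μ := by
    intro t U hU
    rw [show (∫ ω, Complex.exp (Complex.I * (t * U ω)) ∂μ).im
        = RCLike.im (∫ ω, Complex.exp (Complex.I * (t * U ω)) ∂μ) from rfl,
      ← integral_im (hexp_int t U hU)]
    congr 1
    ext ω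
    simp only [RCLike.im_to_complex]
    rw [← Complex.ofReal_mul, mul_comm Complex.I, Complex.exp_mul_I]
    simp only [Complex.add_im, Complex.mul_im, Complex.I_re, Complex.I_im,
      Complex.cos_ofReal_im, Complex.sin_ofReal_re, mul_zero, mul_one, zero_mul,
      add_zero, zero_add]
  -- pointwise identity
  refine integral_congr_ae (Filter.Eventually.of_forall (fun t => ?_))
  dsimp only
  have E1 := pair_cos (μ := μ) hX hY hXY t
  have E2 := pair_cos (μ := μ) hX hX' hXX'i t
  have E3 := pair_cos (μ := μ) hY hY' hYY'i t
  rw [hcosX' t, hsinX' t] at E2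
  rw [hcosY' t, hsinY' t] at E3
  have habs2 : ‖φX t - φY t‖ ^ 2
      = ((∫ ω, Real.cos (t * X ω) ∂μ) - (∫ ω, Real.cos (t * Y ω) ∂μ))^2
        + ((∫ ω, Real.sin (t * X ω) ∂μ) - (∫ ω, Real.sin (t * Y ω) ∂μ))^2 := by
    rw [Complex.sq_norm, Complex.normSq_apply, Complex.sub_re, Complex.sub_im,
      hφX t, hφY t, hre t X hX, hre t Y hY, him t X hX, him t Y hY]
    ring
  rw [habs2, E1, E2, E3]
  ring
end
end
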